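/- For the Lamé operator L₂ = -d²/dx² + 6k² sn²(x,k) with 0<k<1, the edges of the first spectral gap are λ'₁ = 1 + k² and λ'₂ = 1 + 4k² (the roots of δ*_{1,1} = P*(0)+Λ*₀ and δ*_{1,2} = −P*(0)+Λ*₀), the edges of the second gap are λ₁ = 4 + k² (the root of Λ₁) and λ₂ = 2(1 + k² + √(1 − k² + k⁴)), and the bottom of the spectrum is λ₀ = 2(1 + k² − √(1 − k² + k⁴)) (the two roots of Λ₀Λ₁ − 2P(0)P(−1)). -/

import Mathlib

open Set Filter

noncomputable section

/-- `sn` is the Jacobi elliptic sine with modulus `k`: characterised as the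
unique solution of `sn'' = -(1+k²)sn + 2k² sn³` with `sn 0 = 0`, `sn' 0 = 1`. -/
def IsJacobiSn (k : ℝ) (sn : ℝ → ℝ) : Prop :=
  ContDiff ℝ 2 sn ∧ sn 0 = 0 ∧ deriv sn 0 = 1 ∧
    ∀ x : ℝ, deriv (deriv sn) x = -(1 + k ^ 2) * sn x + 2 * k ^ 2 * sn x ^ 3

/-- The complete elliptic integral `K = ∫₀^{π/2} dφ/√(1 - k² sin²φ)`;
`2K` is the period of the Lamé potential `m(m+1)k² sn²(x,k)`. -/
def ellK (k : ℝ) : ℝ := ∫ φ in (0:ℝ)..(Real.pi / 2), 1 / Real.sqrt (1 - k ^ 2 * Real.sin φ ^ 2)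

/-- The Lamé potential `q(x) = m(m+1)k² sn²(x,k)`. -/
def lamePot (m : ℕ) (k : ℝ) (sn : ℝ → ℝ) : ℝ → ℝ :=
  fun x => (m * (m + 1) : ℝ) * k ^ 2 * sn x ^ 2

/-- `ψ` is a nonzero solution of `-ψ'' + qψ = λψ` with `ψ(x+T) = s·ψ(x)`
(`s = 1`: periodic; `s = -1`: antiperiodic). -/
def IsFloquetSolution (q : ℝ → ℝ) (T lam s : ℝ) (ψ : ℝ → ℝ) : Prop :=
  ψ ≠ 0 ∧ ContDiff ℝ 2 ψ ∧
    (∀ x : ℝ, -deriv (deriv ψ) x + q x * ψ x = lam * ψ x) ∧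
    ∀ x : ℝ, ψ (x + T) = s * ψ x

/-- `λ` belongs to the `T`-periodic spectrum. -/
def IsPeriodicEV (q : ℝ → ℝ) (T lam : ℝ) : Prop :=
  ∃ ψ : ℝ → ℝ, IsFloquetSolution q T lam 1 ψ

/-- `λ` belongs to the `T`-antiperiodic spectrum. -/
def IsAntiperiodicEV (q : ℝ → ℝ) (T lam : ℝ) : Prop :=
  ∃ ψ : ℝ → ℝ, IsFloquetSolution q T lam (-1) ψ

/-- Coexistence of two linearly independent `T`-periodic solutions at `λ`
(i.e. `λ` is a periodic eigenvalue of multiplicity 2). -/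
def IsDoublePeriodicEV (q : ℝ → ℝ) (T lam : ℝ) : Prop :=
  ∃ ψ₁ ψ₂ : ℝ → ℝ, LinearIndependent ℝ ![ψ₁, ψ₂] ∧
    IsFloquetSolution q T lam 1 ψ₁ ∧ IsFloquetSolution q T lam 1 ψ₂

/-- Coexistence of two linearly independent `T`-antiperiodic solutions at `λ`. -/
def IsDoubleAntiperiodicEV (q : ℝ → ℝ) (T lam : ℝ) : Prop :=
  ∃ ψ₁ ψ₂ : ℝ → ℝ, LinearIndependent ℝ ![ψ₁, ψ₂] ∧
    IsFloquetSolution q T lam (-1) ψ₁ ∧ IsFloquetSolution q T lam (-1) ψ₂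

/-- `P(z) = m(m+1)k²/4 - zk²/2 - z²k²`. -/
def lameP (m : ℕ) (k z : ℝ) : ℝ :=
  (m * (m + 1) : ℝ) * k ^ 2 / 4 - z * k ^ 2 / 2 - z ^ 2 * k ^ 2

/-- `Λ_n = λ - m(m+1)k²/2 - (1 - k²/2)·4n²`. -/
def lameL (m : ℕ) (k lam : ℝ) (n : ℕ) : ℝ :=
  lam - (m * (m + 1) : ℝ) * k ^ 2 / 2 - (1 - k ^ 2 / 2) * 4 * (n : ℝ) ^ 2

/-- `P*(z) = m(m+1)k²/4 - (2z-1)k²/4 - (2z-1)²k²/4`. -/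
def lamePs (m : ℕ) (k z : ℝ) : ℝ :=
  (m * (m + 1) : ℝ) * k ^ 2 / 4 - (2 * z - 1) * k ^ 2 / 4 - (2 * z - 1) ^ 2 * k ^ 2 / 4

/-- `Λ*_n = λ - m(m+1)k²/2 - (1 - k²/2)(2n+1)²`. -/
def lameLs (m : ℕ) (k lam : ℝ) (n : ℕ) : ℝ :=
  lam - (m * (m + 1) : ℝ) * k ^ 2 / 2 - (1 - k ^ 2 / 2) * (2 * (n : ℝ) + 1) ^ 2

/-- The `(ν+1)×(ν+1)` tridiagonal matrix `K_{ν,1}` with diagonal `Λ₀,…,Λ_ν`,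
superdiagonal `P(-1),…,P(-ν)` and subdiagonal `2P(0), P(1),…,P(ν-1)`
(here `m = 2ν`). -/
def matK1 (ν : ℕ) (k lam : ℝ) : Matrix (Fin (ν + 1)) (Fin (ν + 1)) ℝ :=
  Matrix.of fun i j =>
    if (i : ℕ) = (j : ℕ) then lameL (2 * ν) k lam (i : ℕ)
    else if (j : ℕ) = (i : ℕ) + 1 then lameP (2 * ν) k (-(((i : ℕ) : ℝ) + 1))
    else if (i : ℕ) = (j : ℕ) + 1 then
      (if (j : ℕ) = 0 then 2 * lameP (2 * ν) k 0 else lameP (2 * ν) k ((j : ℕ) : ℝ))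
    else 0

/-- The `ν×ν` tridiagonal matrix `K_{ν,2}` with diagonal `Λ₁,…,Λ_ν`,
superdiagonal `P(-2),…,P(-ν)` and subdiagonal `P(1),…,P(ν-1)` (here `m = 2ν`). -/
def matK2 (ν : ℕ) (k lam : ℝ) : Matrix (Fin ν) (Fin ν) ℝ :=
  Matrix.of fun i j =>
    if (i : ℕ) = (j : ℕ) then lameL (2 * ν) k lam ((i : ℕ) + 1)
    else if (j : ℕ) = (i : ℕ) + 1 then lameP (2 * ν) k (-(((i : ℕ) : ℝ) + 2))
    else if (i : ℕ) = (j : ℕ) + 1 then lameP (2 * ν) k (((j : ℕ) : ℝ) + 1)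
    else 0

/-- The `ν×ν` tridiagonal matrix `K*_{ν,1}` with diagonal
`P*(0)+Λ*₀, Λ*₁,…,Λ*_{ν-1}`, superdiagonal `P*(-1),…,P*(-ν+1)` and subdiagonal
`P*(1),…,P*(ν-1)` (here `m = 2ν`). -/
def matK1s (ν : ℕ) (k lam : ℝ) : Matrix (Fin ν) (Fin ν) ℝ :=
  Matrix.of fun i j =>
    if (i : ℕ) = (j : ℕ) then
      (if (i : ℕ) = 0 then lamePs (2 * ν) k 0 + lameLs (2 * ν) k lam 0
        else lameLs (2 * ν) k lam (i : ℕ))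
    else if (j : ℕ) = (i : ℕ) + 1 then lamePs (2 * ν) k (-(((i : ℕ) : ℝ) + 1))
    else if (i : ℕ) = (j : ℕ) + 1 then lamePs (2 * ν) k (((j : ℕ) : ℝ) + 1)
    else 0

/-- The `ν×ν` tridiagonal matrix `K*_{ν,2}`: identical to `K*_{ν,1}` except
that its `(1,1)` entry is `-P*(0)+Λ*₀`. -/
def matK2s (ν : ℕ) (k lam : ℝ) : Matrix (Fin ν) (Fin ν) ℝ :=
  Matrix.of fun i j =>
    if (i : ℕ) = (j : ℕ) then
      (if (i : ℕ) = 0 then -lamePs (2 * ν) k 0 + lameLs (2 * ν) k lam 0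
        else lameLs (2 * ν) k lam (i : ℕ))
    else if (j : ℕ) = (i : ℕ) + 1 then lamePs (2 * ν) k (-(((i : ℕ) : ℝ) + 1))
    else if (i : ℕ) = (j : ℕ) + 1 then lamePs (2 * ν) k (((j : ℕ) : ℝ) + 1)
    else 0

namespace LameProof
open Real

variable {k : ℝ} {sn : ℝ → ℝ}

lemma sn_contDiff_deriv (h : IsJacobiSn k sn) : ContDiff ℝ 2 (deriv sn) := by
  have h2 := h.1
  have hd : deriv (deriv sn) = fun x => -(1 + k ^ 2) * sn x + 2 * k ^ 2 * sn x ^ 3 :=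
    funext h.2.2.2
  have hdd : ContDiff ℝ 2 (deriv (deriv sn)) := by
    rw [hd]
    exact (contDiff_const.mul h2).add (contDiff_const.mul (h2.pow 3))
  have hds : Differentiable ℝ (deriv sn) := by
    have := (contDiff_succ_iff_deriv (n := 1)).1 h2
    exact this.2.2.differentiable one_ne_zero
  exact (contDiff_succ_iff_deriv (n := 1)).2 ⟨hds, by simp, hdd.of_le (by norm_num)⟩

lemma sn_diff (h : IsJacobiSn k sn) : Differentiable ℝ sn :=
  h.1.differentiable (by norm_num)

lemma dsn_diff (h : IsJacobiSn k sn) : Differentiable ℝ (deriv sn) :=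
  (sn_contDiff_deriv h).differentiable (by norm_num)

lemma sn_cont (h : IsJacobiSn k sn) : Continuous sn := (sn_diff h).continuous
lemma dsn_cont (h : IsJacobiSn k sn) : Continuous (deriv sn) := (dsn_diff h).continuous

/-- first integral -/
lemma sn_first_integral (h : IsJacobiSn k sn) (x : ℝ) :
    (deriv sn x) ^ 2 = (1 - sn x ^ 2) * (1 - k ^ 2 * sn x ^ 2) := by
  have hder : ∀ y, HasDerivAt
      (fun x => (deriv sn x) ^ 2 - (1 - sn x ^ 2) * (1 - k ^ 2 * sn x ^ 2)) 0 y := by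
    intro y
    have h1 : HasDerivAt sn (deriv sn y) y := (sn_diff h y).hasDerivAt
    have h2 : HasDerivAt (deriv sn) (deriv (deriv sn) y) y := (dsn_diff h y).hasDerivAt
    have := ((h2.fun_pow 2).fun_sub (((h1.fun_pow 2).const_sub 1).fun_mul (((h1.fun_pow 2).const_mul (k^2)).const_sub 1)))
    refine this.congr_deriv ?_
    rw [h.2.2.2 y]; ring
  have hconst := is_const_of_deriv_eq_zero (fun z => (hder z).differentiableAt)
    (fun z => (hder z).deriv) x 0
  simp only [h.2.1, h.2.2.1] at hconst
  nlinarith [hconst]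

lemma sn_sq_le_one (hk : k ∈ Set.Ioo (0:ℝ) 1) (h : IsJacobiSn k sn) (x : ℝ) :
    sn x ^ 2 ≤ 1 := by
  by_contra hx
  push_neg at hx
  have hk0 := hk.1; have hk1 := hk.2
  have hik : (1:ℝ) < 1/k^2 := by
    rw [lt_div_iff₀ (by positivity)]; nlinarith
  have hcont : Continuous (fun y => sn y ^ 2) := (sn_cont h).pow 2
  set c := min (1/k^2) (sn x ^ 2) with hc
  have hc1 : 1 < c := lt_min hik hx
  have hcx : c ≤ sn x ^ 2 := min_le_right _ _
  have hck : c ≤ 1/k^2 := min_le_left _ _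
  have h00 : sn 0 ^ 2 = 0 := by rw [h.2.1]; ring
  have hle : sn 0 ^ 2 ≤ sn x ^ 2 := by rw [h00]; positivity
  obtain ⟨y, _, hy⟩ := intermediate_value_uIcc (a := (0:ℝ)) (b := x)
    (hcont.continuousOn) (show (1+c)/2 ∈ Set.uIcc (sn 0 ^2) (sn x ^2) by
      rw [Set.uIcc_of_le hle]
      constructor
      · rw [h00]; nlinarith
      · nlinarith)
  simp only [] at hy
  have h1y : 1 < sn y ^ 2 := by nlinarith [hy]
  have h2y : k^2 * sn y ^2 < 1 := by
    have hsy : sn y ^2 < 1/k^2 := by nlinarith [hy]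
    calc k^2 * sn y^2 < k^2 * (1/k^2) := mul_lt_mul_of_pos_left hsy (by positivity)
      _ = 1 := by field_simp
  have := sn_first_integral h y
  nlinarith [sq_nonneg (deriv sn y)]

end LameProof

namespace LameProof2
open Real LameProof
set_option linter.unusedSectionVars false

variable (k : ℝ) (sn : ℝ → ℝ)

def dnf : ℝ → ℝ := fun x => Real.sqrt (1 - k^2 * sn x^2)
def cnf : ℝ → ℝ := fun x => deriv sn x / dnf k sn x
def thf : ℝ → ℝ := fun x => ∫ t in (0:ℝ)..x, dnf k sn t

variable {k : ℝ} {sn : ℝ → ℝ} (hk : k ∈ Set.Ioo (0:ℝ) 1) (h : IsJacobiSn k sn)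
include hk h

lemma u_pos (x : ℝ) : 0 < 1 - k^2 * sn x ^ 2 := by
  have h1 := sn_sq_le_one hk h x
  have hk0 := hk.1; have hk1 := hk.2
  nlinarith

lemma dn_pos (x : ℝ) : 0 < dnf k sn x := Real.sqrt_pos.2 (u_pos hk h x)

lemma dn_sq (x : ℝ) : dnf k sn x ^ 2 = 1 - k^2 * sn x ^ 2 :=
  Real.sq_sqrt (u_pos hk h x).le

lemma dn_contDiff : ContDiff ℝ 2 (dnf k sn) := by
  have : ContDiff ℝ 2 (fun x => 1 - k^2 * sn x ^ 2) :=
    contDiff_const.sub (contDiff_const.mul (h.1.pow 2))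
  exact this.sqrt (fun x => (u_pos hk h x).ne')

lemma dn_cont : Continuous (dnf k sn) := (dn_contDiff hk h).continuous

lemma cn_contDiff : ContDiff ℝ 2 (cnf k sn) :=
  (sn_contDiff_deriv h).div (dn_contDiff hk h) (fun x => (dn_pos hk h x).ne')

lemma cn_cont : Continuous (cnf k sn) := (cn_contDiff hk h).continuous

lemma cn_mul_dn (x : ℝ) : cnf k sn x * dnf k sn x = deriv sn x := by
  unfold cnf; rw [div_mul_cancel₀ _ (dn_pos hk h x).ne']

lemma cn_sq (x : ℝ) : cnf k sn x ^ 2 = 1 - sn x ^ 2 := by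
  have hd := dn_sq hk h x
  have hfi := sn_first_integral h x
  have hdp := dn_pos hk h x
  unfold cnf
  rw [div_pow, hfi, hd, mul_div_assoc, div_self (by nlinarith [u_pos hk h x] : (1:ℝ) - k^2*sn x^2 ≠ 0), mul_one]

lemma dn_hasDeriv (x : ℝ) :
    HasDerivAt (dnf k sn) (-(k^2) * sn x * cnf k sn x) x := by
  have h1 : HasDerivAt (fun x => 1 - k^2 * sn x ^ 2)
      (-(k^2) * (2 * sn x * deriv sn x)) x := by
    have := (((sn_diff h x).hasDerivAt.fun_pow 2).const_mul (k^2)).const_sub 1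
    exact this.congr_deriv (by ring)
  have := h1.sqrt (u_pos hk h x).ne'
  refine this.congr_deriv ?_
  unfold cnf dnf
  field_simp

lemma cn_hasDeriv (x : ℝ) :
    HasDerivAt (cnf k sn) (-(sn x * dnf k sn x)) x := by
  have hdsn : HasDerivAt (deriv sn) (deriv (deriv sn) x) x := (dsn_diff h x).hasDerivAt
  have := hdsn.div (dn_hasDeriv hk h x) (dn_pos hk h x).ne'
  refine this.congr_deriv ?_
  have hd2 := dn_sq hk h x
  have hcd := cn_mul_dn hk h x
  have hcn2 := cn_sq hk h x
  have hdp : dnf k sn x ^ 2 ≠ 0 := pow_ne_zero 2 (dn_pos hk h x).ne'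
  have hnum : deriv (deriv sn) x * dnf k sn x - deriv sn x * (-k ^ 2 * sn x * cnf k sn x)
      = -(sn x * dnf k sn x) * dnf k sn x ^ 2 := by
    rw [h.2.2.2 x, ← hcd]
    linear_combination (k^2 * sn x * dnf k sn x) * hcn2 + (sn x * dnf k sn x) * hd2
  rw [hnum, mul_div_assoc, div_self hdp, mul_one]

lemma sn_hasDeriv (x : ℝ) : HasDerivAt sn (cnf k sn x * dnf k sn x) x := by
  rw [cn_mul_dn hk h x]; exact (sn_diff h x).hasDerivAt

lemma dn_zero : dnf k sn 0 = 1 := by unfold dnf; rw [h.2.1]; simp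
lemma cn_zero : cnf k sn 0 = 1 := by unfold cnf; rw [h.2.2.1, dn_zero hk h]; norm_num

lemma th_hasDeriv (x : ℝ) : HasDerivAt (thf k sn) (dnf k sn x) x := by
  apply intervalIntegral.integral_hasDerivAt_right
    ((dn_cont hk h).intervalIntegrable 0 x)
    ((dn_cont hk h).stronglyMeasurableAtFilter _ _)
    (dn_cont hk h).continuousAt

lemma th_zero : thf k sn 0 = 0 := by unfold thf; simp

lemma sn_cn_eq (x : ℝ) :
    sn x = Real.sin (thf k sn x) ∧ cnf k sn x = Real.cos (thf k sn x) := by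
  have key : ∀ y, (sn y - Real.sin (thf k sn y))^2 + (cnf k sn y - Real.cos (thf k sn y))^2 = 0 := by
    intro y
    have hder : ∀ z, HasDerivAt
        (fun y => (sn y - Real.sin (thf k sn y))^2 + (cnf k sn y - Real.cos (thf k sn y))^2) 0 z := by
      intro z
      have hth := th_hasDeriv hk h z
      have hsin : HasDerivAt (fun y => Real.sin (thf k sn y))
          (Real.cos (thf k sn z) * dnf k sn z) z := by
        exact (Real.hasDerivAt_sin (thf k sn z)).comp z hth
      have hcos : HasDerivAt (fun y => Real.cos (thf k sn y))
          (-Real.sin (thf k sn z) * dnf k sn z) z := by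
        exact (Real.hasDerivAt_cos (thf k sn z)).comp z hth
      have := (((sn_hasDeriv hk h z).fun_sub hsin).fun_pow 2).fun_add
        (((cn_hasDeriv hk h z).fun_sub hcos).fun_pow 2)
      exact this.congr_deriv (by ring)
    have hconst := is_const_of_deriv_eq_zero (fun z => (hder z).differentiableAt)
      (fun z => (hder z).deriv) y 0
    rw [hconst]
    rw [h.2.1, cn_zero hk h, th_zero hk h]
    simp
  have hy := key x
  constructor
  · nlinarith [sq_nonneg (sn x - Real.sin (thf k sn x)), sq_nonneg (cnf k sn x - Real.cos (thf k sn x))]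
  · nlinarith [sq_nonneg (sn x - Real.sin (thf k sn x)), sq_nonneg (cnf k sn x - Real.cos (thf k sn x))]

lemma sn_eq_sin (x : ℝ) : sn x = Real.sin (thf k sn x) := (sn_cn_eq hk h x).1
lemma cn_eq_cos (x : ℝ) : cnf k sn x = Real.cos (thf k sn x) := (sn_cn_eq hk h x).2

lemma th_strictMono : StrictMono (thf k sn) := by
  apply strictMono_of_deriv_pos
  intro x
  rw [(th_hasDeriv hk h x).deriv]
  exact dn_pos hk h x

end LameProof2

namespace LameProof3
open Real LameProof LameProof2
set_option linter.unusedSectionVars false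

def Ff (k : ℝ) : ℝ → ℝ := fun φ => ∫ t in (0:ℝ)..φ, 1 / Real.sqrt (1 - k^2 * Real.sin t^2)

variable {k : ℝ} {sn : ℝ → ℝ} (hk : k ∈ Set.Ioo (0:ℝ) 1) (h : IsJacobiSn k sn)
include hk

lemma fden_pos (t : ℝ) : 0 < 1 - k^2 * Real.sin t ^2 := by
  have h1 := Real.neg_one_le_sin t
  have h2 := Real.sin_le_one t
  have hk0 := hk.1; have hk1 := hk.2
  have hs : Real.sin t ^ 2 ≤ 1 := Real.sin_sq_le_one t
  nlinarith [mul_nonneg (sq_nonneg k) (sub_nonneg.2 hs)]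

lemma fint_pos (t : ℝ) : 0 < 1 / Real.sqrt (1 - k^2 * Real.sin t^2) := by
  have := Real.sqrt_pos.2 (fden_pos hk t)
  positivity

lemma f_cont : Continuous (fun t => 1 / Real.sqrt (1 - k^2 * Real.sin t^2)) := by
  apply Continuous.div continuous_const
  · exact (continuous_const.sub (continuous_const.mul ((Real.continuous_sin).pow 2))).sqrt
  · intro t; exact (Real.sqrt_pos.2 (fden_pos hk t)).ne'

lemma F_hasDeriv (φ : ℝ) :
    HasDerivAt (Ff k) (1 / Real.sqrt (1 - k^2 * Real.sin φ^2)) φ := by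
  apply intervalIntegral.integral_hasDerivAt_right
    ((f_cont hk).intervalIntegrable 0 φ)
    ((f_cont hk).stronglyMeasurableAtFilter _ _)
    (f_cont hk).continuousAt

lemma F_strictMono : StrictMono (Ff k) := by
  apply strictMono_of_deriv_pos
  intro φ
  rw [(F_hasDeriv hk φ).deriv]
  exact fint_pos hk φ

include h

lemma F_th (x : ℝ) : Ff k (thf k sn x) = x := by
  have hder : ∀ z, HasDerivAt (fun x => Ff k (thf k sn x) - x) 0 z := by
    intro z
    have hth := th_hasDeriv hk h z
    have hF := (F_hasDeriv hk (thf k sn z)).comp z hth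
    have : (1 / Real.sqrt (1 - k^2 * Real.sin (thf k sn z)^2)) * dnf k sn z = 1 := by
      rw [← sn_eq_sin hk h z]
      have : Real.sqrt (1 - k^2 * sn z ^2) = dnf k sn z := rfl
      rw [this]
      field_simp [(dn_pos hk h z).ne']
    have h2 := hF.sub (hasDerivAt_id z)
    rw [this] at h2
    exact h2.congr_deriv (sub_self _)
  have hconst := is_const_of_deriv_eq_zero (fun z => (hder z).differentiableAt)
    (fun z => (hder z).deriv) x 0
  have h0 : Ff k (thf k sn 0) - 0 = 0 := by rw [th_zero hk h]; simp [Ff]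
  rw [h0] at hconst
  linarith [hconst]

omit h

lemma F_add_pi (φ : ℝ) : Ff k (φ + Real.pi) = Ff k φ + 2 * ellK k := by
  have hint : ∀ a b : ℝ, IntervalIntegrable
      (fun t => 1 / Real.sqrt (1 - k^2 * Real.sin t^2)) MeasureTheory.volume a b :=
    fun a b => (f_cont hk).intervalIntegrable a b
  have hsplit : Ff k φ + ∫ t in φ..(φ + Real.pi), 1 / Real.sqrt (1 - k^2 * Real.sin t^2)
      = Ff k (φ + Real.pi) :=
    intervalIntegral.integral_add_adjacent_intervals (hint 0 φ) (hint φ (φ+Real.pi))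
  have hper : Function.Periodic (fun t => 1 / Real.sqrt (1 - k^2 * Real.sin t^2)) Real.pi := by
    intro t; simp [Real.sin_antiperiodic t]
  have hshift := hper.intervalIntegral_add_eq φ 0
  have hzero : (∫ t in (0:ℝ)..(0 + Real.pi), 1 / Real.sqrt (1 - k^2 * Real.sin t^2))
      = 2 * ellK k := by
    rw [zero_add]
    have hhalf : Real.pi = Real.pi/2 + Real.pi/2 := by ring
    have hsp : (∫ t in (0:ℝ)..(Real.pi/2), 1 / Real.sqrt (1 - k^2 * Real.sin t^2))
        + (∫ t in (Real.pi/2)..Real.pi, 1 / Real.sqrt (1 - k^2 * Real.sin t^2))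
        = ∫ t in (0:ℝ)..Real.pi, 1 / Real.sqrt (1 - k^2 * Real.sin t^2) :=
      intervalIntegral.integral_add_adjacent_intervals (hint 0 _) (hint _ _)
    have hrefl : (∫ t in (Real.pi/2)..Real.pi, 1 / Real.sqrt (1 - k^2 * Real.sin t^2))
        = ∫ t in (0:ℝ)..(Real.pi/2), 1 / Real.sqrt (1 - k^2 * Real.sin t^2) := by
      have := intervalIntegral.integral_comp_sub_left
        (fun t => 1 / Real.sqrt (1 - k^2 * Real.sin t^2)) Real.pi (a := 0) (b := Real.pi/2)
      simp only [Real.sin_pi_sub] at this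
      rw [show Real.pi - Real.pi/2 = Real.pi/2 by ring, sub_zero] at this
      exact this.symm
    rw [← hsp, hrefl, ellK]
    ring
  rw [← hsplit, hshift, hzero]

include h

lemma th_add (x : ℝ) : thf k sn (x + 2 * ellK k) = thf k sn x + Real.pi := by
  apply (F_strictMono hk).injective
  rw [F_th hk h, F_add_pi hk, F_th hk h]

lemma T_pos : 0 < 2 * ellK k := by
  have h1 := th_add hk h 0
  have hmono := th_strictMono hk h
  by_contra hle
  push_neg at hle
  have h2 : thf k sn (0 + 2 * ellK k) ≤ thf k sn 0 := by
    apply hmono.monotone; linarith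
  rw [h1] at h2
  linarith [Real.pi_pos]

lemma sn_add (x : ℝ) : sn (x + 2 * ellK k) = - sn x := by
  rw [sn_eq_sin hk h, sn_eq_sin hk h, th_add hk h]
  exact Real.sin_antiperiodic _

lemma cn_add (x : ℝ) : cnf k sn (x + 2 * ellK k) = - cnf k sn x := by
  rw [cn_eq_cos hk h, cn_eq_cos hk h, th_add hk h]
  exact Real.cos_antiperiodic _

lemma dn_add (x : ℝ) : dnf k sn (x + 2 * ellK k) = dnf k sn x := by
  unfold dnf
  rw [sn_add hk h]
  ring_nf

lemma dsn_add (x : ℝ) : deriv sn (x + 2 * ellK k) = - deriv sn x := by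
  rw [← cn_mul_dn hk h, ← cn_mul_dn hk h, cn_add hk h, dn_add hk h]
  ring

lemma th_window {c₁ c₃ : ℝ} (hlt : c₃ < c₁ + 2 * ellK k) :
    thf k sn c₃ < thf k sn c₁ + Real.pi := by
  have := th_strictMono hk h hlt
  rwa [th_add hk h] at this

end LameProof3

namespace LameODE
open Real Set Filter

/-- `ψ` solves `ψ'' = (q - μ)ψ`. -/
def Sol (q : ℝ → ℝ) (μ : ℝ) (ψ : ℝ → ℝ) : Prop :=
  ContDiff ℝ 2 ψ ∧ ∀ x, deriv (deriv ψ) x = (q x - μ) * ψ x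

variable {q : ℝ → ℝ} {μ lam : ℝ} {ψ φ : ℝ → ℝ}

lemma Sol.diff (hs : Sol q μ ψ) : Differentiable ℝ ψ := hs.1.differentiable (by norm_num)

lemma Sol.ddiff (hs : Sol q μ ψ) : Differentiable ℝ (deriv ψ) := by
  have := (contDiff_succ_iff_deriv (n := 1)).1 hs.1
  exact this.2.2.differentiable one_ne_zero

lemma Sol.cont (hs : Sol q μ ψ) : Continuous ψ := hs.diff.continuous
lemma Sol.dcont (hs : Sol q μ ψ) : Continuous (deriv ψ) := hs.ddiff.continuous

lemma Sol.neg (hs : Sol q μ ψ) : Sol q μ (fun x => -ψ x) := by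
  refine ⟨hs.1.neg, fun x => ?_⟩
  have h1 : deriv (fun x => -ψ x) = fun x => -deriv ψ x := by
    funext y; exact deriv.neg
  rw [h1]
  have h2 : deriv (fun x => -deriv ψ x) x = -deriv (deriv ψ) x := deriv.neg
  rw [h2, hs.2 x]; ring

/-- Gronwall-type uniqueness: a solution vanishing to first order at a point is zero. -/
lemma Sol.eq_zero (hs : Sol q μ ψ) {M : ℝ} (hM : ∀ x, |q x - μ| ≤ M)
    {z : ℝ} (hz : ψ z = 0) (hz' : deriv ψ z = 0) : ∀ x, ψ x = 0 := by
  set C := 1 + M with hC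
  have hM0 : 0 ≤ M := le_trans (abs_nonneg _) (hM z)
  set E : ℝ → ℝ := fun x => ψ x ^ 2 + (deriv ψ x) ^ 2 with hE
  have hEd : ∀ x, HasDerivAt E (2 * ψ x * deriv ψ x + 2 * deriv ψ x * ((q x - μ) * ψ x)) x := by
    intro x
    have h1 := (hs.diff x).hasDerivAt
    have h2 := (hs.ddiff x).hasDerivAt
    have := (h1.fun_pow 2).fun_add (h2.fun_pow 2)
    refine this.congr_deriv ?_
    rw [hs.2 x]; ring
  have hEnn : ∀ x, 0 ≤ E x := fun x => by positivity
  have hEbound : ∀ x, |2 * ψ x * deriv ψ x + 2 * deriv ψ x * ((q x - μ) * ψ x)| ≤ C * E x := by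
    intro x
    have habs : |2 * ψ x * deriv ψ x + 2 * deriv ψ x * ((q x - μ) * ψ x)|
        ≤ 2 * |ψ x * deriv ψ x| + 2 * |q x - μ| * |ψ x * deriv ψ x| := by
      calc |2 * ψ x * deriv ψ x + 2 * deriv ψ x * ((q x - μ) * ψ x)|
          ≤ |2 * ψ x * deriv ψ x| + |2 * deriv ψ x * ((q x - μ) * ψ x)| := abs_add_le _ _
        _ = 2 * |ψ x * deriv ψ x| + 2 * |q x - μ| * |ψ x * deriv ψ x| := by
            rw [show (2:ℝ) * ψ x * deriv ψ x = 2 * (ψ x * deriv ψ x) by ring, abs_mul,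
              abs_mul, abs_mul, abs_mul]
            simp [abs_of_nonneg, abs_mul]
            ring
    have hEx : E x = ψ x ^ 2 + deriv ψ x ^ 2 := rfl
    have h2ab : 2 * |ψ x * deriv ψ x| ≤ E x := by
      rw [abs_mul, hEx]
      nlinarith [sq_nonneg (|ψ x| - |deriv ψ x|), sq_abs (ψ x), sq_abs (deriv ψ x),
        abs_nonneg (ψ x), abs_nonneg (deriv ψ x)]
    have hqm := hM x
    have := abs_nonneg (ψ x * deriv ψ x)
    calc |2 * ψ x * deriv ψ x + 2 * deriv ψ x * ((q x - μ) * ψ x)|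
        ≤ 2 * |ψ x * deriv ψ x| + 2 * |q x - μ| * |ψ x * deriv ψ x| := habs
      _ ≤ E x + M * E x := by rw [hEx] at h2ab ⊢; nlinarith
      _ = C * E x := by rw [hC]; ring
  -- forward direction
  have hfwd : ∀ x, z ≤ x → E x = 0 := by
    intro x hx
    have hG : ∀ y, HasDerivAt (fun t => E t * Real.exp (-C * t))
        ((2 * ψ y * deriv ψ y + 2 * deriv ψ y * ((q y - μ) * ψ y)) * Real.exp (-C*y)
          + E y * (-C * Real.exp (-C*y))) y := by
      intro y
      have he : HasDerivAt (fun t => Real.exp (-C * t)) (Real.exp (-C*y) * (-C)) y := by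
        simpa using ((hasDerivAt_id y).const_mul (-C)).exp
      have := (hEd y).fun_mul he
      exact this.congr_deriv (by ring)
    have hmono : Antitone (fun t => E t * Real.exp (-C * t)) := by
      apply antitone_of_deriv_nonpos (fun y => (hG y).differentiableAt)
      intro y
      rw [(hG y).deriv]
      have h1 := hEbound y
      have h2 := Real.exp_pos (-C*y)
      have hEy : E y = ψ y ^ 2 + deriv ψ y ^ 2 := rfl
      nlinarith [abs_le.1 h1, h2, hEnn y]
    have := hmono hx
    have hEz : E z = 0 := by simp only [hE, hz, hz']; ring
    have hpos := Real.exp_pos (-C*x)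
    have hle : E x * Real.exp (-C*x) ≤ 0 := by
      calc E x * Real.exp (-C*x) ≤ E z * Real.exp (-C*z) := this
        _ = 0 := by rw [hEz]; ring
    nlinarith [hEnn x]
  have hbwd : ∀ x, x ≤ z → E x = 0 := by
    intro x hx
    have hG : ∀ y, HasDerivAt (fun t => E t * Real.exp (C * t))
        ((2 * ψ y * deriv ψ y + 2 * deriv ψ y * ((q y - μ) * ψ y)) * Real.exp (C*y)
          + E y * (C * Real.exp (C*y))) y := by
      intro y
      have he : HasDerivAt (fun t => Real.exp (C * t)) (Real.exp (C*y) * C) y := by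
        simpa using ((hasDerivAt_id y).const_mul C).exp
      have := (hEd y).fun_mul he
      exact this.congr_deriv (by ring)
    have hmono : Monotone (fun t => E t * Real.exp (C * t)) := by
      apply monotone_of_deriv_nonneg (fun y => (hG y).differentiableAt)
      intro y
      rw [(hG y).deriv]
      have h1 := hEbound y
      have h2 := Real.exp_pos (C*y)
      have hEy : E y = ψ y ^ 2 + deriv ψ y ^ 2 := rfl
      nlinarith [abs_le.1 h1, h2, hEnn y]
    have := hmono hx
    have hEz : E z = 0 := by simp only [hE, hz, hz']; ring
    have hpos := Real.exp_pos (C*x)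
    have hle : E x * Real.exp (C*x) ≤ 0 := by
      calc E x * Real.exp (C*x) ≤ E z * Real.exp (C*z) := this
        _ = 0 := by rw [hEz]; ring
    nlinarith [hEnn x]
  intro x
  have hEx : E x = ψ x ^ 2 + deriv ψ x ^ 2 := rfl
  rcases le_total z x with hle | hle
  · have := hfwd x hle
    rw [hEx] at this
    nlinarith [sq_nonneg (ψ x), sq_nonneg (deriv ψ x)]
  · have := hbwd x hle
    rw [hEx] at this
    nlinarith [sq_nonneg (ψ x), sq_nonneg (deriv ψ x)]

lemma Sol.deriv_ne_zero (hs : Sol q μ ψ) {M : ℝ} (hM : ∀ x, |q x - μ| ≤ M)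
    (hne : ψ ≠ 0) {a : ℝ} (ha : ψ a = 0) : deriv ψ a ≠ 0 := by
  intro hd
  exact hne (funext (hs.eq_zero hM ha hd))

/-- zeros are isolated on the right -/
lemma Sol.isolated_right (hs : Sol q μ ψ) {M : ℝ} (hM : ∀ x, |q x - μ| ≤ M)
    (hne : ψ ≠ 0) {a : ℝ} (ha : ψ a = 0) :
    ∃ δ > 0, ∀ x ∈ Ioo a (a + δ), ψ x ≠ 0 := by
  have hd := hs.deriv_ne_zero hM hne ha
  have hda : HasDerivAt ψ (deriv ψ a) a := (hs.diff a).hasDerivAt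
  have hslope := hasDerivAt_iff_tendsto_slope.1 hda
  have hsub : nhdsWithin a (Ioi a) ≤ nhdsWithin a ({a}ᶜ) :=
    nhdsWithin_mono a (fun x hx => ne_of_gt hx)
  have hev : ∀ᶠ x in nhdsWithin a (Ioi a), slope ψ a x ≠ 0 :=
    ((hslope.mono_left hsub).eventually_ne hd)
  have hev2 : ∀ᶠ x in nhdsWithin a (Ioi a), ψ x ≠ 0 := by
    filter_upwards [hev, self_mem_nhdsWithin] with x hx hxa
    intro hpsi
    apply hx
    rw [slope_def_field, ha, hpsi]
    simp
  rw [eventually_iff, mem_nhdsGT_iff_exists_Ioo_subset] at hev2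
  obtain ⟨u, hu, hsubset⟩ := hev2
  exact ⟨u - a, by simp [Set.mem_Ioi] at hu; linarith,
    fun x hx => hsubset ⟨hx.1, by have := hx.2; simpa using by linarith [hx.2]⟩⟩

/-- next zero after a -/
lemma Sol.next_zero (hs : Sol q μ ψ) {M : ℝ} (hM : ∀ x, |q x - μ| ≤ M)
    (hne : ψ ≠ 0) {a w : ℝ} (ha : ψ a = 0) (haw : a < w) (hw : ψ w = 0) :
    ∃ b, a < b ∧ b ≤ w ∧ ψ b = 0 ∧ ∀ x ∈ Ioo a b, ψ x ≠ 0 := by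
  obtain ⟨δ, hδ, hiso⟩ := hs.isolated_right hM hne ha
  have hwδ : a + δ ≤ w := by
    by_contra hlt
    push_neg at hlt
    exact hiso w ⟨haw, hlt⟩ hw
  set S : Set ℝ := {x | ψ x = 0} ∩ Ici (a + δ) with hS
  have hSclosed : IsClosed S := by
    apply IsClosed.inter _ isClosed_Ici
    exact isClosed_eq hs.cont continuous_const
  have hSne : S.Nonempty := ⟨w, hw, hwδ⟩
  have hSbdd : BddBelow S := ⟨a + δ, fun x hx => hx.2⟩
  set b := sInf S with hb
  have hbS : b ∈ S := hSclosed.csInf_mem hSne hSbdd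
  have hbge : a + δ ≤ b := hbS.2
  refine ⟨b, by linarith, csInf_le hSbdd ⟨hw, hwδ⟩, hbS.1, ?_⟩
  intro x hx hpsi
  rcases lt_or_ge x (a + δ) with hlt | hge
  · exact hiso x ⟨hx.1, hlt⟩ hpsi
  · exact absurd (csInf_le hSbdd ⟨hpsi, hge⟩) (not_le.2 hx.2)

/-- fixed sign on an interval with no zeros -/
lemma Sol.sign_on (hs : Sol q μ ψ) {a b : ℝ} (hab : a < b)
    (hno : ∀ x ∈ Ioo a b, ψ x ≠ 0) :
    ∃ s : ℝ, (s = 1 ∨ s = -1) ∧ ∀ x ∈ Ioo a b, 0 < s * ψ x := by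
  set x₀ := (a + b)/2 with hx₀
  have hx₀mem : x₀ ∈ Ioo a b := ⟨by simp [hx₀]; linarith, by simp [hx₀]; linarith⟩
  have hψx₀ := hno x₀ hx₀mem
  rcases lt_or_gt_of_ne hψx₀ with hneg | hpos
  · refine ⟨-1, Or.inr rfl, fun x hx => ?_⟩
    rcases lt_trichotomy (ψ x) 0 with h1 | h1 | h1
    · nlinarith
    · exact absurd h1 (hno x hx)
    · exfalso
      obtain ⟨y, hy, hy0⟩ := intermediate_value_uIcc (a := x) (b := x₀)
        (hs.cont.continuousOn) (show (0:ℝ) ∈ uIcc (ψ x) (ψ x₀) by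
          rw [Set.mem_uIcc]; right; constructor <;> linarith)
      have hymem : y ∈ Ioo a b := Set.ordConnected_Ioo.uIcc_subset hx hx₀mem hy
      exact hno y hymem hy0
  · refine ⟨1, Or.inl rfl, fun x hx => ?_⟩
    rcases lt_trichotomy (ψ x) 0 with h1 | h1 | h1
    · exfalso
      obtain ⟨y, hy, hy0⟩ := intermediate_value_uIcc (a := x) (b := x₀)
        (hs.cont.continuousOn) (show (0:ℝ) ∈ uIcc (ψ x) (ψ x₀) by
          rw [Set.mem_uIcc]; left; constructor <;> linarith)
      have hymem : y ∈ Ioo a b := Set.ordConnected_Ioo.uIcc_subset hx hx₀mem hy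
      exact hno y hymem hy0
    · exact absurd h1 (hno x hx)
    · nlinarith

end LameODE

namespace LameODE
open Real Set Filter

variable {q : ℝ → ℝ} {μ lam : ℝ} {ψ φ : ℝ → ℝ}

lemma sign_ne_zero {a b s : ℝ} (hab : a < b) (hsgn : ∀ x ∈ Ioo a b, 0 < s * ψ x) :
    s ≠ 0 := by
  intro h0
  have := hsgn ((a+b)/2) ⟨by linarith, by linarith⟩
  rw [h0] at this; simp at this

lemma Sol.deriv_pos_left (hs : Sol q μ ψ) {M : ℝ} (hM : ∀ x, |q x - μ| ≤ M)
    (hne : ψ ≠ 0) {a b s : ℝ} (hab : a < b) (ha : ψ a = 0)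
    (hsgn : ∀ x ∈ Ioo a b, 0 < s * ψ x) : 0 < s * deriv ψ a := by
  have hdne := hs.deriv_ne_zero hM hne ha
  have hs0 := sign_ne_zero hab hsgn
  rcases lt_trichotomy (s * deriv ψ a) 0 with hlt | heq | hgt
  · exfalso
    have hda : HasDerivAt ψ (deriv ψ a) a := (hs.diff a).hasDerivAt
    have hslope := hasDerivAt_iff_tendsto_slope.1 hda
    have hsub : nhdsWithin a (Ioi a) ≤ nhdsWithin a ({a}ᶜ) :=
      nhdsWithin_mono a (fun x hx => ne_of_gt hx)
    have hsl2 : Tendsto (fun x => s * slope ψ a x) (nhdsWithin a (Ioi a))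
        (nhds (s * deriv ψ a)) := (hslope.mono_left hsub).const_mul s
    have hev : ∀ᶠ x in nhdsWithin a (Ioi a), s * slope ψ a x < 0 :=
      hsl2.eventually_lt_const hlt
    have hmem : Ioo a b ∈ nhdsWithin a (Ioi a) :=
      Ioo_mem_nhdsGT_of_mem ⟨le_refl a, hab⟩
    obtain ⟨x, hx1, hx2⟩ := (hev.and (eventually_mem_set.2 hmem)).exists
    have hgt0 := hsgn x hx2
    rw [slope_def_field, ha, sub_zero] at hx1
    have hxa : 0 < x - a := by have := hx2.1; linarith
    have : 0 < s * (ψ x / (x - a)) := by rw [← mul_div_assoc]; exact div_pos hgt0 hxa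
    linarith
  · exact absurd heq (mul_ne_zero hs0 hdne)
  · exact hgt

lemma Sol.deriv_neg_right (hs : Sol q μ ψ) {M : ℝ} (hM : ∀ x, |q x - μ| ≤ M)
    (hne : ψ ≠ 0) {a b s : ℝ} (hab : a < b) (hb : ψ b = 0)
    (hsgn : ∀ x ∈ Ioo a b, 0 < s * ψ x) : s * deriv ψ b < 0 := by
  have hdne := hs.deriv_ne_zero hM hne hb
  have hs0 := sign_ne_zero hab hsgn
  rcases lt_trichotomy (s * deriv ψ b) 0 with hlt | heq | hgt
  · exact hlt
  · exact absurd heq (mul_ne_zero hs0 hdne)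
  · exfalso
    have hdb : HasDerivAt ψ (deriv ψ b) b := (hs.diff b).hasDerivAt
    have hslope := hasDerivAt_iff_tendsto_slope.1 hdb
    have hsub : nhdsWithin b (Iio b) ≤ nhdsWithin b ({b}ᶜ) :=
      nhdsWithin_mono b (fun x hx => ne_of_lt hx)
    have hsl2 : Tendsto (fun x => s * slope ψ b x) (nhdsWithin b (Iio b))
        (nhds (s * deriv ψ b)) := (hslope.mono_left hsub).const_mul s
    have hev : ∀ᶠ x in nhdsWithin b (Iio b), 0 < s * slope ψ b x :=
      hsl2.eventually_const_lt hgt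
    have hmem : Ioo a b ∈ nhdsWithin b (Iio b) :=
      Ioo_mem_nhdsLT_of_mem ⟨hab, le_refl b⟩
    obtain ⟨x, hx1, hx2⟩ := (hev.and (eventually_mem_set.2 hmem)).exists
    have hgt0 := hsgn x hx2
    rw [slope_def_field, hb, sub_zero] at hx1
    have hxb : x - b < 0 := by have := hx2.2; linarith
    have : s * (ψ x / (x - b)) < 0 := by rw [← mul_div_assoc]; exact div_neg_of_pos_of_neg hgt0 hxb
    linarith

/-- Sturm comparison: between consecutive zeros of a solution at `μ` there is a
zero of any solution at `lam > μ`. -/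
lemma sturm (hψ : Sol q μ ψ) (hφ : Sol q lam φ) {M : ℝ} (hM : ∀ x, |q x - μ| ≤ M)
    (hneψ : ψ ≠ 0) (hlt : μ < lam) {a b : ℝ} (hab : a < b)
    (hψa : ψ a = 0) (hψb : ψ b = 0) (hno : ∀ x ∈ Ioo a b, ψ x ≠ 0) :
    ∃ c ∈ Ioo a b, φ c = 0 := by
  by_contra hcon
  push_neg at hcon
  obtain ⟨s, _, hsψ⟩ := hψ.sign_on hab hno
  obtain ⟨t, _, htφ⟩ := hφ.sign_on hab hcon
  set V : ℝ → ℝ := fun x => s * t * (deriv ψ x * φ x - ψ x * deriv φ x) with hV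
  have hVd : ∀ x, HasDerivAt V (s * t * ((lam - μ) * (ψ x * φ x))) x := by
    intro x
    have h1 := ((hψ.ddiff x).hasDerivAt.fun_mul (hφ.diff x).hasDerivAt).fun_sub
      ((hψ.diff x).hasDerivAt.fun_mul (hφ.ddiff x).hasDerivAt)
    have h2 := h1.const_mul (s * t)
    refine h2.congr_deriv ?_
    rw [hψ.2 x, hφ.2 x]
    ring
  have hVmono : StrictMonoOn V (Icc a b) := by
    apply strictMonoOn_of_deriv_pos (convex_Icc a b)
    · exact (Differentiable.continuous (fun x => (hVd x).differentiableAt)).continuousOn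
    · intro x hx
      rw [interior_Icc] at hx
      rw [(hVd x).deriv]
      have h1 := hsψ x hx
      have h2 := htφ x hx
      have : s * t * ((lam - μ) * (ψ x * φ x)) = (lam - μ) * ((s * ψ x) * (t * φ x)) := by ring
      rw [this]
      have := mul_pos h1 h2
      nlinarith
  -- endpoint values
  have haφ : 0 ≤ t * φ a := by
    have hcont : Tendsto (fun x => t * φ x) (nhdsWithin a (Ioi a)) (nhds (t * φ a)) :=
      ((continuous_const.mul hφ.cont).continuousAt).continuousWithinAt
    apply ge_of_tendsto hcont
    filter_upwards [eventually_mem_set.2 (Ioo_mem_nhdsGT_of_mem (by constructor <;> [exact le_refl a; exact hab]))] with x hx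
    exact (htφ x hx).le
  have hbφ : 0 ≤ t * φ b := by
    have hcont : Tendsto (fun x => t * φ x) (nhdsWithin b (Iio b)) (nhds (t * φ b)) :=
      ((continuous_const.mul hφ.cont).continuousAt).continuousWithinAt
    apply ge_of_tendsto hcont
    filter_upwards [eventually_mem_set.2 (Ioo_mem_nhdsLT_of_mem (by constructor <;> [exact hab; exact le_refl b]))] with x hx
    exact (htφ x hx).le
  have hψ'a := hψ.deriv_pos_left hM hneψ hab hψa hsψ
  have hψ'b := hψ.deriv_neg_right hM hneψ hab hψb hsψ
  have hVa : 0 ≤ V a := by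
    have : V a = (s * deriv ψ a) * (t * φ a) := by rw [hV]; simp [hψa]; ring
    rw [this]
    exact mul_nonneg hψ'a.le haφ
  have hVb : V b ≤ 0 := by
    have : V b = (s * deriv ψ b) * (t * φ b) := by rw [hV]; simp [hψb]; ring
    rw [this]
    exact mul_nonpos_of_nonpos_of_nonneg hψ'b.le hbφ
  have := hVmono ⟨le_refl a, hab.le⟩ ⟨hab.le, le_refl b⟩ hab
  linarith

lemma deriv_shift {T s₁ : ℝ} (hd : Differentiable ℝ ψ)
    (h1 : ∀ x, ψ (x + T) = s₁ * ψ x) (x : ℝ) :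
    deriv ψ (x + T) = s₁ * deriv ψ x := by
  have hfun : (fun y => ψ (y + T)) = fun y => s₁ * ψ y := funext h1
  have h2 := deriv_comp_add_const ψ T x
  rw [hfun] at h2
  rw [← h2, deriv_const_mul _ (hd x)]

/-- Wronskian orthogonality over a (common) Floquet period. -/
lemma ortho (hψ : Sol q μ ψ) (hφ : Sol q lam φ) {T s₁ s₂ : ℝ}
    (h1 : ∀ x, ψ (x + T) = s₁ * ψ x) (h2 : ∀ x, φ (x + T) = s₂ * φ x)
    (hss : s₁ * s₂ = 1) (hne : μ ≠ lam) (a : ℝ) :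
    ∫ x in a..(a + T), ψ x * φ x = 0 := by
  set W : ℝ → ℝ := fun x => deriv ψ x * φ x - ψ x * deriv φ x with hW
  have hWd : ∀ x, HasDerivAt W ((lam - μ) * (ψ x * φ x)) x := by
    intro x
    have hd := ((hψ.ddiff x).hasDerivAt.fun_mul (hφ.diff x).hasDerivAt).fun_sub
      ((hψ.diff x).hasDerivAt.fun_mul (hφ.ddiff x).hasDerivAt)
    refine hd.congr_deriv ?_
    rw [hψ.2 x, hφ.2 x]; ring
  have hWT : W (a + T) = W a := by
    rw [hW]
    simp only
    rw [h1 a, h2 a, deriv_shift hψ.diff h1 a, deriv_shift hφ.diff h2 a]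
    have : s₁ * deriv ψ a * (s₂ * φ a) - s₁ * ψ a * (s₂ * deriv φ a)
        = (s₁ * s₂) * (deriv ψ a * φ a - ψ a * deriv φ a) := by ring
    rw [this, hss, one_mul]
  have hftc : (∫ x in a..(a+T), (lam - μ) * (ψ x * φ x)) = W (a+T) - W a := by
    apply intervalIntegral.integral_deriv_eq_sub'
    · exact funext (fun x => (hWd x).deriv)
    · intro x _; exact (hWd x).differentiableAt
    · exact ((continuous_const.mul (hψ.cont.mul hφ.cont))).continuousOn
  rw [hWT, sub_self] at hftc
  rw [intervalIntegral.integral_const_mul] at hftc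
  rcases mul_eq_zero.1 hftc with h | h
  · exact absurd (by linarith : μ = lam) hne
  · exact h

end LameODE

namespace LameMain
open Real Set Filter LameProof LameProof2 LameProof3 LameODE
set_option linter.unusedSectionVars false

def Dk (k : ℝ) : ℝ := Real.sqrt (1 - k^2 + k^4)
def mu0 (k : ℝ) : ℝ := 2*(1 + k^2 - Dk k)
def mu2 (k : ℝ) : ℝ := 2*(1 + k^2 + Dk k)

variable {k : ℝ} {sn : ℝ → ℝ} (hk : k ∈ Set.Ioo (0:ℝ) 1) (h : IsJacobiSn k sn)
include hk

lemma Dk_sq : Dk k ^ 2 = 1 - k^2 + k^4 := by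
  have hk0 := hk.1; have hk1 := hk.2
  apply Real.sq_sqrt; nlinarith

lemma Dk_pos : 0 < Dk k := by
  have hk0 := hk.1; have hk1 := hk.2
  apply Real.sqrt_pos.2; nlinarith

lemma Dk_lt : Dk k < 1 + k^2 := by
  have hk0 := hk.1; have hk1 := hk.2
  by_contra hcon
  push_neg at hcon
  nlinarith [Dk_sq hk, Dk_pos hk]

lemma Dk_gt_ksq : k^2 < Dk k := by
  have hk0 := hk.1; have hk1 := hk.2
  by_contra hcon
  push_neg at hcon
  nlinarith [Dk_sq hk, Dk_pos hk]

lemma two_Dk_gt : 1 + k^2 < 2 * Dk k := by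
  have hk0 := hk.1; have hk1 := hk.2
  by_contra hcon
  push_neg at hcon
  nlinarith [Dk_sq hk, Dk_pos hk, mul_pos (show (0:ℝ) < 1 - k^2 by nlinarith)
    (show (0:ℝ) < 1 - k^2 by nlinarith)]

lemma two_Dk_gt' : 2 - k^2 < 2 * Dk k := by
  have hk0 := hk.1; have hk1 := hk.2
  by_contra hcon
  push_neg at hcon
  nlinarith [Dk_sq hk, Dk_pos hk, pow_pos hk0 4]

lemma mu0_pos : 0 < mu0 k := by
  have := Dk_lt hk; rw [mu0]; linarith

lemma mu0_lt_two : mu0 k < 2 := by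
  have := Dk_gt_ksq hk; rw [mu0]; nlinarith

lemma mu2_gt_two : 2 < mu2 k := by
  have h1 := Dk_pos hk; have hk0 := hk.1; rw [mu2]; nlinarith

lemma mu0_quad : mu0 k ^2 - 4*(1+k^2)*(mu0 k) + 12*k^2 = 0 := by
  have h1 := Dk_sq hk; rw [mu0]; nlinarith

lemma mu2_quad : mu2 k ^2 - 4*(1+k^2)*(mu2 k) + 12*k^2 = 0 := by
  have h1 := Dk_sq hk; rw [mu2]; nlinarith

lemma order_facts : mu0 k < 1 + k^2 ∧ (1:ℝ) + k^2 < 1 + 4*k^2 ∧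
    (1:ℝ) + 4*k^2 < 4 + k^2 ∧ (4:ℝ) + k^2 < mu2 k := by
  have h1 := two_Dk_gt hk; have h2 := two_Dk_gt' hk
  have hk0 := hk.1; have hk1 := hk.2
  refine ⟨by rw [mu0]; nlinarith, by nlinarith, by nlinarith, by rw [mu2]; nlinarith⟩

/-- the potential -/
lemma q_eq (x : ℝ) : lamePot 2 k sn x = 6 * k^2 * sn x ^2 := by
  rw [lamePot]; norm_num

include h

lemma q_bound (μ : ℝ) : ∀ x, |lamePot 2 k sn x - μ| ≤ 6*k^2 + |μ| := by
  intro x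
  rw [q_eq hk]
  have h1 := sn_sq_le_one hk h x
  have h2 : 0 ≤ sn x ^2 := sq_nonneg _
  have hk0 := hk.1
  rw [abs_le]
  have h3 := neg_abs_le μ; have h4 := le_abs_self μ
  constructor
  · nlinarith
  · nlinarith

/-- helper: second derivative from two HasDerivAt laws -/
lemma deriv2 {f g e : ℝ → ℝ} (h1 : ∀ x, HasDerivAt f (g x) x)
    (h2 : ∀ x, HasDerivAt g (e x) x) (x : ℝ) : deriv (deriv f) x = e x := by
  have hdf : deriv f = g := funext fun y => (h1 y).deriv
  rw [hdf]; exact (h2 x).deriv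

/-- ψ = sn² - c solves the equation at μ provided μc = 2, μ = 4(1+k²) - 6k²c. -/
lemma sol_sq {c μ : ℝ} (hcμ : μ * c = 2) (hμ : μ = 4*(1+k^2) - 6*k^2*c) :
    Sol (lamePot 2 k sn) μ (fun x => sn x ^2 - c) := by
  constructor
  · exact (h.1.pow 2).sub contDiff_const
  · intro x
    have h1 : ∀ y, HasDerivAt (fun x => sn x ^2 - c)
        (2 * sn y * (cnf k sn y * dnf k sn y)) y := by
      intro y
      have := ((sn_hasDeriv hk h y).fun_pow 2).sub_const c
      exact this.congr_deriv (by ring)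
    have h2 : ∀ y, HasDerivAt (fun y => 2 * sn y * (cnf k sn y * dnf k sn y))
        (2*((cnf k sn y)^2*(dnf k sn y)^2 - sn y^2*(dnf k sn y)^2 - k^2*sn y^2*(cnf k sn y)^2)) y := by
      intro y
      have hd := ((sn_hasDeriv hk h y).fun_mul
        ((cn_hasDeriv hk h y).fun_mul (dn_hasDeriv hk h y)))
      have hd2 := hd.const_mul 2
      refine (hd2.congr_of_eventuallyEq (Filter.Eventually.of_forall fun z => ?_)).congr_deriv ?_
      · ring
      · ring
    rw [deriv2 hk h h1 h2 x, q_eq hk, cn_sq hk h x, dn_sq hk h x]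
    subst hμ
    linear_combination -hcμ

/-- ψ = sn·cn solves at μ₁ = 4 + k². -/
lemma sol_sncn : Sol (lamePot 2 k sn) (4 + k^2) (fun x => sn x * cnf k sn x) := by
  constructor
  · exact h.1.mul (cn_contDiff hk h)
  · intro x
    have h1 : ∀ y, HasDerivAt (fun x => sn x * cnf k sn x)
        (dnf k sn y * (cnf k sn y^2 - sn y^2)) y := by
      intro y
      have := (sn_hasDeriv hk h y).fun_mul (cn_hasDeriv hk h y)
      exact this.congr_deriv (by ring)
    have h2 : ∀ y, HasDerivAt (fun y => dnf k sn y * (cnf k sn y^2 - sn y^2))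
        (-(k^2)*sn y*cnf k sn y*(cnf k sn y^2 - sn y^2)
          + dnf k sn y*(2*cnf k sn y*(-(sn y * dnf k sn y)) - 2*sn y*(cnf k sn y * dnf k sn y))) y := by
      intro y
      have := (dn_hasDeriv hk h y).fun_mul
        (((cn_hasDeriv hk h y).fun_pow 2).fun_sub ((sn_hasDeriv hk h y).fun_pow 2))
      exact this.congr_deriv (by ring)
    rw [deriv2 hk h h1 h2 x, q_eq hk]
    have e1 := cn_sq hk h x
    have e2 := dn_sq hk h x
    linear_combination (-(k^2)*sn x*cnf k sn x) * e1 + (-4*sn x*cnf k sn x) * e2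

/-- ψ = sn·dn solves at α₂ = 1 + 4k². -/
lemma sol_sndn : Sol (lamePot 2 k sn) (1 + 4*k^2) (fun x => sn x * dnf k sn x) := by
  constructor
  · exact h.1.mul (dn_contDiff hk h)
  · intro x
    have h1 : ∀ y, HasDerivAt (fun x => sn x * dnf k sn x)
        (cnf k sn y * (dnf k sn y^2 - k^2*sn y^2)) y := by
      intro y
      have := (sn_hasDeriv hk h y).fun_mul (dn_hasDeriv hk h y)
      exact this.congr_deriv (by ring)
    have h2 : ∀ y, HasDerivAt (fun y => cnf k sn y * (dnf k sn y^2 - k^2*sn y^2))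
        (-(sn y * dnf k sn y)*(dnf k sn y^2 - k^2*sn y^2)
          + cnf k sn y*(2*dnf k sn y*(-(k^2)*sn y*cnf k sn y)
            - k^2*(2*sn y*(cnf k sn y*dnf k sn y)))) y := by
      intro y
      have := (cn_hasDeriv hk h y).fun_mul
        (((dn_hasDeriv hk h y).fun_pow 2).fun_sub (((sn_hasDeriv hk h y).fun_pow 2).const_mul (k^2)))
      exact this.congr_deriv (by ring)
    rw [deriv2 hk h h1 h2 x, q_eq hk]
    have e1 := cn_sq hk h x
    have e2 := dn_sq hk h x
    linear_combination (-4*k^2*sn x*dnf k sn x) * e1 + (-(sn x)*dnf k sn x) * e2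

/-- ψ = sn' = cn·dn solves at α₁ = 1 + k². -/
lemma sol_dsn : Sol (lamePot 2 k sn) (1 + k^2) (deriv sn) := by
  constructor
  · exact sn_contDiff_deriv h
  · intro x
    have h1 : ∀ y, HasDerivAt (deriv sn)
        (-(1 + k ^ 2) * sn y + 2 * k ^ 2 * sn y ^ 3) y := by
      intro y
      have := (dsn_diff h y).hasDerivAt
      rwa [h.2.2.2 y] at this
    have h2 : ∀ y, HasDerivAt (fun y => -(1 + k ^ 2) * sn y + 2 * k ^ 2 * sn y ^ 3)
        (-(1+k^2)*(cnf k sn y*dnf k sn y) + 2*k^2*(3*sn y^2*(cnf k sn y*dnf k sn y))) y := by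
      intro y
      have := (((sn_hasDeriv hk h y)).const_mul (-(1+k^2))).fun_add
        (((sn_hasDeriv hk h y).fun_pow 3).const_mul (2*k^2))
      exact this.congr_deriv (by ring)
    rw [deriv2 hk h h1 h2 x, q_eq hk, ← cn_mul_dn hk h x]
    ring

end LameMain

namespace LameMain
open Real Set Filter LameProof LameProof2 LameProof3 LameODE
set_option linter.unusedSectionVars false

variable {k : ℝ} {sn : ℝ → ℝ} (hk : k ∈ Set.Ioo (0:ℝ) 1) (h : IsJacobiSn k sn)
include hk h

lemma th_cont : Continuous (thf k sn) :=
  Differentiable.continuous (fun x => (th_hasDeriv hk h x).differentiableAt)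

omit h

/-- if sin² w = sin² v with w < v < w + π then w + v ∈ πℤ -/
lemma sin_sq_helper {w v : ℝ} (hlt : w < v) (hlt2 : v < w + Real.pi)
    (he : Real.sin w ^ 2 = Real.sin v ^ 2) : ∃ n : ℤ, w + v = n * Real.pi := by
  have a1 := Real.sin_sq_add_cos_sq w
  have a2 := Real.sin_sq_add_cos_sq v
  have hc : Real.cos (2*w) - Real.cos (2*v) = 0 := by
    rw [Real.cos_two_mul, Real.cos_two_mul]; nlinarith
  rw [Real.cos_sub_cos] at hc
  have harg1 : (2*w + 2*v)/2 = w + v := by ring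
  have harg2 : (2*w - 2*v)/2 = w - v := by ring
  rw [harg1, harg2] at hc
  have hsvw : 0 < Real.sin (v - w) :=
    Real.sin_pos_of_pos_of_lt_pi (by linarith) (by linarith)
  have hswv : Real.sin (w - v) < 0 := by
    have : w - v = -(v - w) := by ring
    rw [this, Real.sin_neg]; linarith
  have hprod : Real.sin (w + v) = 0 := by
    rcases mul_eq_zero.1 (by linarith [hc] :
        Real.sin (w + v) * Real.sin (w - v) = 0) with h1 | h1
    · exact h1
    · exact absurd h1 (ne_of_lt hswv)
  obtain ⟨n, hn⟩ := Real.sin_eq_zero_iff.1 hprod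
  exact ⟨n, hn.symm⟩

include h

/-- The function sn² cannot take the same value at three points within an open period. -/
lemma phi2_triple {x₁ x₂ x₃ : ℝ} (h12 : x₁ < x₂) (h23 : x₂ < x₃)
    (h13 : x₃ < x₁ + 2 * ellK k)
    (e12 : sn x₁ ^2 = sn x₂ ^2) (e13 : sn x₁ ^2 = sn x₃ ^2) : False := by
  set w₁ := thf k sn x₁
  set w₂ := thf k sn x₂
  set w₃ := thf k sn x₃
  have hw12 : w₁ < w₂ := th_strictMono hk h h12
  have hw23 : w₂ < w₃ := th_strictMono hk h h23
  have hw13 : w₃ < w₁ + Real.pi := th_window hk h h13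
  have hs1 : sn x₁ = Real.sin w₁ := sn_eq_sin hk h x₁
  have hs2 : sn x₂ = Real.sin w₂ := sn_eq_sin hk h x₂
  have hs3 : sn x₃ = Real.sin w₃ := sn_eq_sin hk h x₃
  obtain ⟨n, hn⟩ := sin_sq_helper hk hw12 (by linarith)
    (by rw [← hs1, ← hs2]; exact e12)
  obtain ⟨m, hm⟩ := sin_sq_helper hk (lt_trans hw12 hw23) hw13
    (by rw [← hs1, ← hs3]; exact e13)
  have hdiff : w₃ - w₂ = (m - n : ℤ) * Real.pi := by push_cast; nlinarith [hn, hm]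
  have h1 : (0:ℝ) < (m - n : ℤ) * Real.pi := by rw [← hdiff]; linarith
  have h2 : ((m - n : ℤ) : ℝ) * Real.pi < Real.pi := by rw [← hdiff]; linarith
  have hpi := Real.pi_pos
  rcases le_or_gt (m - n : ℤ) 0 with hle | hgt
  · have : ((m - n : ℤ) : ℝ) ≤ 0 := by exact_mod_cast hle
    nlinarith
  · have : (1:ℝ) ≤ ((m - n : ℤ) : ℝ) := by exact_mod_cast hgt
    nlinarith

/-- φ₂ solves at mu2 -/
lemma sol_phi2 : Sol (lamePot 2 k sn) (mu2 k) (fun x => sn x ^2 - 2/(mu2 k)) := by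
  have hmu2 : (0:ℝ) < mu2 k := by linarith [mu2_gt_two hk]
  apply sol_sq hk h
  · field_simp
  · have hq := mu2_quad hk
    field_simp
    nlinarith [hq]

/-- φ₀ solves at mu0 -/
lemma sol_phi0 : Sol (lamePot 2 k sn) (mu0 k) (fun x => sn x ^2 - 2/(mu0 k)) := by
  have hmu0 : (0:ℝ) < mu0 k := mu0_pos hk
  apply sol_sq hk h
  · field_simp
  · have hq := mu0_quad hk
    field_simp
    nlinarith [hq]

/-- no solution below mu2 vanishes at three points within a closed period window -/
lemma no_three_zeros {μ : ℝ} {ψ : ℝ → ℝ} (hψ : Sol (lamePot 2 k sn) μ ψ)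
    (hne : ψ ≠ 0) (hμ2 : μ < mu2 k) {a z₁ z₂ z₃ : ℝ}
    (h1 : a < z₁) (h2 : z₁ < z₂) (h3 : z₂ < z₃) (h4 : z₃ ≤ a + 2 * ellK k)
    (ha : ψ a = 0) (hz1 : ψ z₁ = 0) (hz2 : ψ z₂ = 0) (hz3 : ψ z₃ = 0)
    (hno1 : ∀ x ∈ Ioo a z₁, ψ x ≠ 0) (hno2 : ∀ x ∈ Ioo z₁ z₂, ψ x ≠ 0)
    (hno3 : ∀ x ∈ Ioo z₂ z₃, ψ x ≠ 0) : False := by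
  have hM := q_bound hk h μ
  obtain ⟨c₁, hc₁, hφ1⟩ := sturm hψ (sol_phi2 hk h) hM hne hμ2 h1 ha hz1 hno1
  obtain ⟨c₂, hc₂, hφ2⟩ := sturm hψ (sol_phi2 hk h) hM hne hμ2 h2 hz1 hz2 hno2
  obtain ⟨c₃, hc₃, hφ3⟩ := sturm hψ (sol_phi2 hk h) hM hne hμ2 h3 hz2 hz3 hno3
  have e1 : sn c₁ ^2 = 2/(mu2 k) := by linarith [hφ1]
  have e2 : sn c₂ ^2 = 2/(mu2 k) := by linarith [hφ2]
  have e3 : sn c₃ ^2 = 2/(mu2 k) := by linarith [hφ3]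
  exact phi2_triple hk h (lt_trans hc₁.2 hc₂.1) (lt_trans hc₂.2 hc₃.1)
    (by linarith [hc₁.1, hc₃.2]) (by rw [e1, e2]) (by rw [e1, e3])

/-- positivity of integrals of continuous functions positive on the open interval -/
lemma int_pos {f : ℝ → ℝ} (hc : Continuous f) {a b : ℝ} (hab : a < b)
    (hpos : ∀ x ∈ Ioo a b, 0 < f x) : 0 < ∫ x in a..b, f x :=
  intervalIntegral.intervalIntegral_pos_of_pos_on (hc.intervalIntegrable a b) hpos hab

end LameMain

namespace LameMain
open Real Set Filter LameProof LameProof2 LameProof3 LameODE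
set_option linter.unusedSectionVars false

variable {k : ℝ} {sn : ℝ → ℝ} (hk : k ∈ Set.Ioo (0:ℝ) 1) (h : IsJacobiSn k sn)
include hk h

lemma floq_unpack {μ s : ℝ} {ψ : ℝ → ℝ}
    (hf : IsFloquetSolution (lamePot 2 k sn) (2*ellK k) μ s ψ) :
    Sol (lamePot 2 k sn) μ ψ ∧ ψ ≠ 0 ∧ ∀ x, ψ (x + 2*ellK k) = s * ψ x :=
  ⟨⟨hf.2.1, fun x => by linarith [hf.2.2.1 x]⟩, hf.1, hf.2.2.2⟩

theorem antiperiodic_classify {μ : ℝ}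
    (hev : IsAntiperiodicEV (lamePot 2 k sn) (2*ellK k) μ)
    (hμ2 : μ < mu2 k) : μ = 1 + k^2 ∨ μ = 1 + 4*k^2 := by
  obtain ⟨ψ, hf⟩ := hev
  obtain ⟨hsol, hne, hshift'⟩ := floq_unpack hk h hf
  have hshift : ∀ x, ψ (x + 2*ellK k) = -ψ x := fun x => by rw [hshift' x]; ring
  by_contra hcon
  push_neg at hcon
  obtain ⟨hμ1, hμ4⟩ := hcon
  have hTpos : 0 < 2 * ellK k := T_pos hk h
  have hM := q_bound hk h μ
  have hzero : ∃ a, ψ a = 0 := by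
    rcases eq_or_ne (ψ 0) 0 with h0 | h0
    · exact ⟨0, h0⟩
    · have h1 : ψ (0 + 2*ellK k) = -ψ 0 := hshift 0
      obtain ⟨y, _, hy⟩ := intermediate_value_uIcc (a := (0:ℝ)) (b := 0 + 2*ellK k)
        hsol.cont.continuousOn (show (0:ℝ) ∈ uIcc (ψ 0) (ψ (0 + 2*ellK k)) by
          rw [h1, Set.mem_uIcc]
          rcases lt_or_gt_of_ne h0 with hlt | hgt
          · left; constructor <;> linarith
          · right; constructor <;> linarith)
      exact ⟨y, hy⟩
  obtain ⟨a, ha⟩ := hzero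
  have haT : ψ (a + 2*ellK k) = 0 := by rw [hshift a, ha, neg_zero]
  obtain ⟨z₁, hz₁a, hz₁le, hz₁0, hz₁no⟩ := hsol.next_zero hM hne ha (by linarith) haT
  rcases eq_or_lt_of_le hz₁le with heq | hlt
  · subst heq
    obtain ⟨s₁, hs₁pm, hsgn⟩ := hsol.sign_on (show a < a + 2*ellK k by linarith) hz₁no
    have ho1 : (∫ x in a..a + 2*ellK k, ψ x * deriv sn x) = 0 :=
      ortho hsol (sol_dsn hk h) hshift'
        (fun x => show deriv sn (x + 2*ellK k) = -1 * deriv sn x by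
          rw [dsn_add hk h x]; ring) (by norm_num) hμ1 a
    have ho2 : (∫ x in a..a + 2*ellK k, ψ x * (sn x * dnf k sn x)) = 0 :=
      ortho hsol (sol_sndn hk h) hshift'
        (fun x => show sn (x + 2*ellK k) * dnf k sn (x + 2*ellK k)
            = -1 * (sn x * dnf k sn x) by
          rw [sn_add hk h x, dn_add hk h x]; ring) (by norm_num) hμ4 a
    set ca := Real.cos (thf k sn a) with hca
    set sa := Real.sin (thf k sn a) with hsa
    have hgid : ∀ x, ψ x * (dnf k sn x * Real.sin (thf k sn x - thf k sn a))
        = ca * (ψ x * (sn x * dnf k sn x)) - sa * (ψ x * deriv sn x) := by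
      intro x
      rw [Real.sin_sub, ← sn_eq_sin hk h x, ← cn_eq_cos hk h x, ← cn_mul_dn hk h x]
      ring
    have hcont1 : Continuous (fun x => ψ x * (sn x * dnf k sn x)) :=
      hsol.cont.mul ((sn_cont h).mul (dn_cont hk h))
    have hcont2 : Continuous (fun x => ψ x * deriv sn x) :=
      hsol.cont.mul (dsn_cont h)
    have hint : (∫ x in a..a + 2*ellK k,
        ψ x * (dnf k sn x * Real.sin (thf k sn x - thf k sn a))) = 0 := by
      have hcongr : (∫ x in a..a + 2*ellK k,
          ψ x * (dnf k sn x * Real.sin (thf k sn x - thf k sn a)))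
          = ∫ x in a..a + 2*ellK k,
            (ca * (ψ x * (sn x * dnf k sn x)) - sa * (ψ x * deriv sn x)) :=
        intervalIntegral.integral_congr (fun x _ => hgid x)
      rw [hcongr, intervalIntegral.integral_sub
        ((continuous_const.fun_mul hcont1).intervalIntegrable _ _)
        ((continuous_const.fun_mul hcont2).intervalIntegrable _ _),
        intervalIntegral.integral_const_mul, intervalIntegral.integral_const_mul,
        ho1, ho2]
      ring
    have hposint : 0 < ∫ x in a..a + 2*ellK k,
        s₁ * (ψ x * (dnf k sn x * Real.sin (thf k sn x - thf k sn a))) := by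
      apply int_pos hk h
      · exact continuous_const.mul (hsol.cont.mul ((dn_cont hk h).mul
          (Real.continuous_sin.comp ((th_cont hk h).sub continuous_const))))
      · linarith
      · intro x hx
        have hψpos := hsgn x hx
        have hdn := dn_pos hk h x
        have hth1 : thf k sn a < thf k sn x := th_strictMono hk h hx.1
        have hth2 : thf k sn x < thf k sn a + Real.pi := th_window hk h hx.2
        have hsin : 0 < Real.sin (thf k sn x - thf k sn a) :=
          Real.sin_pos_of_pos_of_lt_pi (by linarith) (by linarith)
        have : s₁ * (ψ x * (dnf k sn x * Real.sin (thf k sn x - thf k sn a)))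
            = (s₁ * ψ x) * (dnf k sn x * Real.sin (thf k sn x - thf k sn a)) := by ring
        rw [this]
        positivity
    rw [intervalIntegral.integral_const_mul, hint, mul_zero] at hposint
    exact lt_irrefl 0 hposint
  · obtain ⟨z₂, hz₂z₁, hz₂le, hz₂0, hz₂no⟩ := hsol.next_zero hM hne hz₁0 hlt haT
    rcases eq_or_lt_of_le hz₂le with heq2 | hlt2
    · obtain ⟨s₁, hs₁pm, hsgn1⟩ := hsol.sign_on hz₁a hz₁no
      obtain ⟨s₂, hs₂pm, hsgn2⟩ := hsol.sign_on hz₂z₁ hz₂no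
      have d1 := hsol.deriv_pos_left hM hne hz₁a ha hsgn1
      have d2 := hsol.deriv_neg_right hM hne hz₁a hz₁0 hsgn1
      have d3 := hsol.deriv_pos_left hM hne hz₂z₁ hz₁0 hsgn2
      have d4 := hsol.deriv_neg_right hM hne hz₂z₁ hz₂0 hsgn2
      have hds : deriv ψ (a + 2*ellK k) = -1 * deriv ψ a := deriv_shift hsol.diff hshift' a
      rw [heq2, hds] at d4
      rcases hs₁pm with h1 | h1 <;> rcases hs₂pm with h2 | h2 <;>
        (subst h1; subst h2; linarith)
    · obtain ⟨z₃, hz₃z₂, hz₃le, hz₃0, hz₃no⟩ := hsol.next_zero hM hne hz₂0 hlt2 haT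
      exact no_three_zeros hk h hsol hne hμ2 hz₁a hz₂z₁ hz₃z₂ hz₃le
        ha hz₁0 hz₂0 hz₃0 hz₁no hz₂no hz₃no

end LameMain

namespace LameMain
open Real Set Filter LameProof LameProof2 LameProof3 LameODE
set_option linter.unusedSectionVars false

variable {k : ℝ} {sn : ℝ → ℝ} (hk : k ∈ Set.Ioo (0:ℝ) 1) (h : IsJacobiSn k sn)
include hk h

theorem periodic_classify {μ : ℝ}
    (hev : IsPeriodicEV (lamePot 2 k sn) (2*ellK k) μ)
    (hμ2 : μ < mu2 k) : μ = mu0 k ∨ μ = 4 + k^2 := by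
  obtain ⟨ψ, hf⟩ := hev
  obtain ⟨hsol, hne, hshift'⟩ := floq_unpack hk h hf
  have hshift : ∀ x, ψ (x + 2*ellK k) = ψ x := fun x => by rw [hshift' x]; ring
  by_contra hcon
  push_neg at hcon
  obtain ⟨hμ0, hμ1⟩ := hcon
  have hμ2ne : μ ≠ mu2 k := ne_of_lt hμ2
  have hTpos : 0 < 2 * ellK k := T_pos hk h
  have hM := q_bound hk h μ
  have hmu0pos := mu0_pos hk
  have hmu0lt := mu0_lt_two hk
  have hmu2gt := mu2_gt_two hk
  -- orthogonality relations over arbitrary windows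
  have ho0 : ∀ b, (∫ x in b..b + 2*ellK k, ψ x * (sn x ^2 - 2/(mu0 k))) = 0 := by
    intro b
    exact ortho hsol (sol_phi0 hk h) hshift'
      (fun x => show sn (x + 2*ellK k) ^2 - 2/(mu0 k) = 1 * (sn x ^2 - 2/(mu0 k)) by
        rw [sn_add hk h x]; ring) (by norm_num) hμ0 b
  have ho2 : ∀ b, (∫ x in b..b + 2*ellK k, ψ x * (sn x ^2 - 2/(mu2 k))) = 0 := by
    intro b
    exact ortho hsol (sol_phi2 hk h) hshift'
      (fun x => show sn (x + 2*ellK k) ^2 - 2/(mu2 k) = 1 * (sn x ^2 - 2/(mu2 k)) by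
        rw [sn_add hk h x]; ring) (by norm_num) hμ2ne b
  have hIsc : ∀ b, (∫ x in b..b + 2*ellK k, ψ x * (sn x * cnf k sn x)) = 0 := by
    intro b
    exact ortho hsol (sol_sncn hk h) hshift'
      (fun x => show sn (x + 2*ellK k) * cnf k sn (x + 2*ellK k) = 1 * (sn x * cnf k sn x) by
        rw [sn_add hk h x, cn_add hk h x]; ring) (by norm_num) hμ1 b
  have hcont0 : Continuous (fun x => ψ x * (sn x ^2 - 2/(mu0 k))) :=
    hsol.cont.mul (((sn_cont h).pow 2).sub continuous_const)
  have hcont2 : Continuous (fun x => ψ x * (sn x ^2 - 2/(mu2 k))) :=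
    hsol.cont.mul (((sn_cont h).pow 2).sub continuous_const)
  have hc0ne : 2/(mu2 k) - 2/(mu0 k) ≠ 0 := by
    have h1 : 2/(mu2 k) < 1 := by rw [div_lt_one (by linarith)]; linarith
    have h2 : 1 < 2/(mu0 k) := by rw [lt_div_iff₀ hmu0pos]; linarith
    linarith
  have hIpsi : ∀ b, (∫ x in b..b + 2*ellK k, ψ x) = 0 := by
    intro b
    have hdiff : (∫ x in b..b + 2*ellK k,
        (ψ x * (sn x ^2 - 2/(mu0 k)) - ψ x * (sn x ^2 - 2/(mu2 k)))) = 0 := by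
      rw [intervalIntegral.integral_sub (hcont0.intervalIntegrable _ _)
        (hcont2.intervalIntegrable _ _), ho0 b, ho2 b]
      ring
    have hcongr : (∫ x in b..b + 2*ellK k,
        (ψ x * (sn x ^2 - 2/(mu0 k)) - ψ x * (sn x ^2 - 2/(mu2 k))))
        = ∫ x in b..b + 2*ellK k, (2/(mu2 k) - 2/(mu0 k)) * ψ x :=
      intervalIntegral.integral_congr (fun x _ => by ring)
    rw [hcongr, intervalIntegral.integral_const_mul] at hdiff
    rcases mul_eq_zero.1 hdiff with h1 | h1
    · exact absurd h1 hc0ne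
    · exact h1
  have hIsq : ∀ b, (∫ x in b..b + 2*ellK k, ψ x * sn x ^2) = 0 := by
    intro b
    have hcongr : (∫ x in b..b + 2*ellK k, ψ x * sn x ^2)
        = ∫ x in b..b + 2*ellK k,
          (ψ x * (sn x ^2 - 2/(mu0 k)) + (2/(mu0 k)) * ψ x) :=
      intervalIntegral.integral_congr (fun x _ => by ring)
    rw [hcongr, intervalIntegral.integral_add (hcont0.intervalIntegrable _ _)
      ((continuous_const.fun_mul hsol.cont).intervalIntegrable _ _),
      ho0 b, intervalIntegral.integral_const_mul, hIpsi b]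
    ring
  -- ψ has a zero
  have hzero : ∃ a, ψ a = 0 := by
    by_contra hnz
    push_neg at hnz
    have hsign : ∀ x, 0 < ψ 0 * ψ x := by
      intro x
      rcases lt_trichotomy (ψ 0 * ψ x) 0 with hlt | heq | hgt
      · exfalso
        obtain ⟨y, _, hy⟩ := intermediate_value_uIcc (a := (0:ℝ)) (b := x)
          hsol.cont.continuousOn (show (0:ℝ) ∈ uIcc (ψ 0) (ψ x) by
            rw [Set.mem_uIcc]
            rcases lt_or_gt_of_ne (hnz 0) with h1 | h1
            · have h2 : 0 < ψ x := by nlinarith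
              left; constructor <;> linarith
            · have h2 : ψ x < 0 := by nlinarith
              right; constructor <;> linarith)
        exact hnz y hy
      · rcases mul_eq_zero.1 heq with h1 | h1
        · exact absurd h1 (hnz 0)
        · exact absurd h1 (hnz x)
      · exact hgt
    have hpos : 0 < ∫ x in (0:ℝ)..0 + 2*ellK k, ψ 0 * ψ x :=
      int_pos hk h (continuous_const.mul hsol.cont) (by linarith)
        (fun x _ => hsign x)
    rw [intervalIntegral.integral_const_mul, hIpsi 0, mul_zero] at hpos
    exact lt_irrefl 0 hpos
  obtain ⟨a, ha⟩ := hzero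
  have haT : ψ (a + 2*ellK k) = 0 := by rw [hshift a, ha]
  obtain ⟨z₁, hz₁a, hz₁le, hz₁0, hz₁no⟩ := hsol.next_zero hM hne ha (by linarith) haT
  rcases eq_or_lt_of_le hz₁le with heq | hlt
  · -- only one zero per period: parity contradiction for periodic ψ
    subst heq
    obtain ⟨s₁, hs₁pm, hsgn⟩ := hsol.sign_on hz₁a hz₁no
    have d1 := hsol.deriv_pos_left hM hne hz₁a ha hsgn
    have d2 := hsol.deriv_neg_right hM hne hz₁a hz₁0 hsgn
    have hds : deriv ψ (a + 2*ellK k) = 1 * deriv ψ a := deriv_shift hsol.diff hshift' a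
    rw [hds] at d2
    linarith
  · obtain ⟨z₂, hz₂z₁, hz₂le, hz₂0, hz₂no⟩ := hsol.next_zero hM hne hz₁0 hlt haT
    rcases eq_or_lt_of_le hz₂le with heq2 | hlt2
    · -- exactly two zeros per period: the rotation trick
      subst heq2
      obtain ⟨s₁, hs₁pm, hsgn1⟩ := hsol.sign_on hz₁a hz₁no
      obtain ⟨s₂, hs₂pm, hsgn2⟩ := hsol.sign_on hz₂z₁ hz₂no
      have d2 := hsol.deriv_neg_right hM hne hz₁a hz₁0 hsgn1
      have d3 := hsol.deriv_pos_left hM hne hz₂z₁ hz₁0 hsgn2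
      have hneg : ∀ x ∈ Ioo z₁ (a + 2*ellK k), s₁ * ψ x < 0 := by
        intro x hx
        have h23 := hsgn2 x hx
        rcases hs₁pm with h1 | h1 <;> rcases hs₂pm with h2 | h2 <;>
          subst h1 <;> subst h2 <;> linarith
      set ca := Real.cos (thf k sn a) with hca
      set sa := Real.sin (thf k sn a) with hsa
      set cz := Real.cos (thf k sn z₁) with hcz
      set sz := Real.sin (thf k sn z₁) with hsz
      set A := -2*(ca*cz) + 2*(sa*sz) with hA
      set B := 2*(ca*sz + sa*cz) with hB
      set C := -2*(sa*sz) with hC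
      have hgid : ∀ x, ψ x * ((-2) * (Real.sin (thf k sn x - thf k sn a)
            * Real.sin (thf k sn x - thf k sn z₁)))
          = A * (ψ x * sn x ^2) + B * (ψ x * (sn x * cnf k sn x)) + C * ψ x := by
        intro x
        rw [Real.sin_sub, Real.sin_sub, ← sn_eq_sin hk h x, ← cn_eq_cos hk h x]
        have e1 := cn_sq hk h x
        rw [hA, hB, hC]
        linear_combination (-2 * ψ x * sa * sz) * e1
      have hcsq : Continuous (fun x => ψ x * sn x ^2) :=
        hsol.cont.mul ((sn_cont h).pow 2)
      have hcsc : Continuous (fun x => ψ x * (sn x * cnf k sn x)) :=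
        hsol.cont.mul ((sn_cont h).mul (cn_cont hk h))
      have hint : (∫ x in a..a + 2*ellK k,
          ψ x * ((-2) * (Real.sin (thf k sn x - thf k sn a)
            * Real.sin (thf k sn x - thf k sn z₁)))) = 0 := by
        have hcongr : (∫ x in a..a + 2*ellK k,
            ψ x * ((-2) * (Real.sin (thf k sn x - thf k sn a)
              * Real.sin (thf k sn x - thf k sn z₁))))
            = ∫ x in a..a + 2*ellK k,
              (A * (ψ x * sn x ^2) + B * (ψ x * (sn x * cnf k sn x)) + C * ψ x) :=
          intervalIntegral.integral_congr (fun x _ => hgid x)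
        rw [hcongr, intervalIntegral.integral_add, intervalIntegral.integral_add,
          intervalIntegral.integral_const_mul, intervalIntegral.integral_const_mul,
          intervalIntegral.integral_const_mul, hIsq a, hIsc a, hIpsi a]
        · ring
        · exact (continuous_const.mul hcsq).intervalIntegrable _ _
        · exact (continuous_const.mul hcsc).intervalIntegrable _ _
        · exact ((continuous_const.mul hcsq).add
            (continuous_const.mul hcsc)).intervalIntegrable _ _
        · exact (continuous_const.mul hsol.cont).intervalIntegrable _ _
      have hcontg : Continuous (fun x => s₁ * (ψ x * ((-2) *
          (Real.sin (thf k sn x - thf k sn a) * Real.sin (thf k sn x - thf k sn z₁))))) := by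
        apply continuous_const.mul
        apply hsol.cont.mul
        apply continuous_const.mul
        exact (Real.continuous_sin.comp ((th_cont hk h).sub continuous_const)).mul
          (Real.continuous_sin.comp ((th_cont hk h).sub continuous_const))
      have hthz₁ : thf k sn z₁ < thf k sn a + Real.pi := th_window hk h hlt
      have hpos1 : 0 < ∫ x in a..z₁, s₁ * (ψ x * ((-2) *
          (Real.sin (thf k sn x - thf k sn a) * Real.sin (thf k sn x - thf k sn z₁)))) := by
        apply int_pos hk h hcontg hz₁a
        intro x hx
        have hψ := hsgn1 x hx
        have ht1 : thf k sn a < thf k sn x := th_strictMono hk h hx.1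
        have ht2 : thf k sn x < thf k sn z₁ := th_strictMono hk h hx.2
        have hsinA : 0 < Real.sin (thf k sn x - thf k sn a) :=
          Real.sin_pos_of_pos_of_lt_pi (by linarith) (by linarith)
        have hsinB : Real.sin (thf k sn x - thf k sn z₁) < 0 := by
          have h1 : 0 < Real.sin (thf k sn z₁ - thf k sn x) :=
            Real.sin_pos_of_pos_of_lt_pi (by linarith) (by linarith)
          have h2 : thf k sn x - thf k sn z₁ = -(thf k sn z₁ - thf k sn x) := by ring
          rw [h2, Real.sin_neg]; linarith
        nlinarith [mul_pos hψ (mul_pos hsinA (neg_pos.2 hsinB))]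
      have hpos2 : 0 < ∫ x in z₁..a + 2*ellK k, s₁ * (ψ x * ((-2) *
          (Real.sin (thf k sn x - thf k sn a) * Real.sin (thf k sn x - thf k sn z₁)))) := by
        apply int_pos hk h hcontg hlt
        intro x hx
        have hψ := hneg x hx
        have ht1 : thf k sn z₁ < thf k sn x := th_strictMono hk h hx.1
        have ht0 : thf k sn a < thf k sn z₁ := th_strictMono hk h hz₁a
        have ht2 : thf k sn x < thf k sn a + Real.pi := th_window hk h hx.2
        have ht3 : thf k sn x < thf k sn z₁ + Real.pi := by linarith
        have hsinA : 0 < Real.sin (thf k sn x - thf k sn a) :=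
          Real.sin_pos_of_pos_of_lt_pi (by linarith) (by linarith)
        have hsinB : 0 < Real.sin (thf k sn x - thf k sn z₁) :=
          Real.sin_pos_of_pos_of_lt_pi (by linarith) (by linarith)
        nlinarith [mul_pos (mul_pos hsinA hsinB) (neg_pos.2 hψ)]
      have hsplit : (∫ x in a..z₁, s₁ * (ψ x * ((-2) *
          (Real.sin (thf k sn x - thf k sn a) * Real.sin (thf k sn x - thf k sn z₁)))))
          + ∫ x in z₁..a + 2*ellK k, s₁ * (ψ x * ((-2) *
            (Real.sin (thf k sn x - thf k sn a) * Real.sin (thf k sn x - thf k sn z₁))))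
          = ∫ x in a..a + 2*ellK k, s₁ * (ψ x * ((-2) *
            (Real.sin (thf k sn x - thf k sn a) * Real.sin (thf k sn x - thf k sn z₁)))) :=
        intervalIntegral.integral_add_adjacent_intervals
          (hcontg.intervalIntegrable _ _) (hcontg.intervalIntegrable _ _)
      have hfin : (∫ x in a..a + 2*ellK k, s₁ * (ψ x * ((-2) *
          (Real.sin (thf k sn x - thf k sn a) * Real.sin (thf k sn x - thf k sn z₁)))))
          = 0 := by
        rw [intervalIntegral.integral_const_mul, hint, mul_zero]
      rw [hfin] at hsplit
      linarith
    · obtain ⟨z₃, hz₃z₂, hz₃le, hz₃0, hz₃no⟩ := hsol.next_zero hM hne hz₂0 hlt2 haT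
      exact no_three_zeros hk h hsol hne hμ2 hz₁a hz₂z₁ hz₃z₂ hz₃le
        ha hz₁0 hz₂0 hz₃0 hz₁no hz₂no hz₃no

end LameMain

namespace LameMain
open Real Set Filter LameProof LameProof2 LameProof3 LameODE
set_option linter.unusedSectionVars false

variable {k : ℝ} {sn : ℝ → ℝ} (hk : k ∈ Set.Ioo (0:ℝ) 1) (h : IsJacobiSn k sn)
include hk h

lemma sol_to_floq {μ s : ℝ} {ψ : ℝ → ℝ} (hs : Sol (lamePot 2 k sn) μ ψ)
    (hne : ψ ≠ 0) (hshift : ∀ x, ψ (x + 2*ellK k) = s * ψ x) :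
    IsFloquetSolution (lamePot 2 k sn) (2*ellK k) μ s ψ :=
  ⟨hne, hs.1, fun x => by have := hs.2 x; linarith, hshift⟩

/-- a point where θ takes a prescribed value in (0, π) -/
lemma th_hits {v : ℝ} (hv0 : 0 ≤ v) (hvπ : v ≤ Real.pi) : ∃ x, thf k sn x = v := by
  have hT : thf k sn (0 + 2*ellK k) = Real.pi := by
    rw [th_add hk h 0, th_zero hk h, zero_add]
  have h0 : thf k sn 0 = 0 := th_zero hk h
  obtain ⟨x, _, hx⟩ := intermediate_value_uIcc (a := (0:ℝ)) (b := 0 + 2*ellK k)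
    (th_cont hk h).continuousOn (show v ∈ uIcc (thf k sn 0) (thf k sn (0 + 2*ellK k)) by
      rw [h0, hT, Set.mem_uIcc]; left; exact ⟨hv0, hvπ⟩)
  exact ⟨x, hx⟩

lemma ev_mu0 : IsPeriodicEV (lamePot 2 k sn) (2*ellK k) (mu0 k) := by
  refine ⟨fun x => sn x ^2 - 2/(mu0 k), sol_to_floq hk h (sol_phi0 hk h) ?_ ?_⟩
  · intro h0
    have := congrFun h0 0
    simp only [h.2.1, Pi.zero_apply] at this
    have hmu := mu0_pos hk
    have : (2:ℝ)/(mu0 k) = 0 := by linarith [this]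
    rw [div_eq_zero_iff] at this
    rcases this with h1 | h1
    · norm_num at h1
    · linarith
  · intro x; rw [sn_add hk h x]; ring

lemma ev_mu2 : IsPeriodicEV (lamePot 2 k sn) (2*ellK k) (mu2 k) := by
  refine ⟨fun x => sn x ^2 - 2/(mu2 k), sol_to_floq hk h (sol_phi2 hk h) ?_ ?_⟩
  · intro h0
    have := congrFun h0 0
    simp only [h.2.1, Pi.zero_apply] at this
    have hmu := mu2_gt_two hk
    have : (2:ℝ)/(mu2 k) = 0 := by linarith [this]
    rw [div_eq_zero_iff] at this
    rcases this with h1 | h1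
    · norm_num at h1
    · linarith
  · intro x; rw [sn_add hk h x]; ring

lemma ev_mu1 : IsPeriodicEV (lamePot 2 k sn) (2*ellK k) (4 + k^2) := by
  refine ⟨fun x => sn x * cnf k sn x, sol_to_floq hk h (sol_sncn hk h) ?_ ?_⟩
  · intro h0
    obtain ⟨x, hx⟩ := th_hits hk h (v := Real.pi/4) (by positivity)
      (by linarith [Real.pi_pos])
    have := congrFun h0 x
    simp only [Pi.zero_apply] at this
    rw [sn_eq_sin hk h x, cn_eq_cos hk h x, hx] at this
    have h1 : Real.sin (Real.pi/4) > 0 :=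
      Real.sin_pos_of_pos_of_lt_pi (by positivity) (by linarith [Real.pi_pos])
    have h2 : Real.cos (Real.pi/4) > 0 :=
      Real.cos_pos_of_mem_Ioo ⟨by linarith [Real.pi_pos], by linarith [Real.pi_pos]⟩
    nlinarith
  · intro x; rw [sn_add hk h x, cn_add hk h x]; ring

lemma ev_al1 : IsAntiperiodicEV (lamePot 2 k sn) (2*ellK k) (1 + k^2) := by
  refine ⟨deriv sn, sol_to_floq hk h (sol_dsn hk h) ?_ ?_⟩
  · intro h0
    have := congrFun h0 0
    rw [h.2.2.1] at this
    norm_num at this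
  · intro x; rw [dsn_add hk h x]; ring

lemma ev_al2 : IsAntiperiodicEV (lamePot 2 k sn) (2*ellK k) (1 + 4*k^2) := by
  refine ⟨fun x => sn x * dnf k sn x, sol_to_floq hk h (sol_sndn hk h) ?_ ?_⟩
  · intro h0
    obtain ⟨x, hx⟩ := th_hits hk h (v := Real.pi/2) (by positivity)
      (by linarith [Real.pi_pos])
    have := congrFun h0 x
    simp only [Pi.zero_apply] at this
    rw [sn_eq_sin hk h x, hx, Real.sin_pi_div_two] at this
    have := dn_pos hk h x
    nlinarith
  · intro x; rw [sn_add hk h x, dn_add hk h x]; ring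

end LameMain


/-- For the Lamé operator `L₂ = -d²/dx² + 6k² sn²(x,k)` with
`0 < k < 1`, given the oscillation-theorem enumeration
`λ₀ < λ'₁ ≤ λ'₂ < λ₁ ≤ λ₂ < ⋯` of its periodic (`λⱼ`) and antiperiodic (`λ'ⱼ`)
spectra, the edges of the first gap are `λ'₁ = 1 + k²`, `λ'₂ = 1 + 4k²` (the
roots of `δ*_{1,1} = P*(0)+Λ*₀` and `δ*_{1,2} = -P*(0)+Λ*₀`), the edges of the
second gap are `λ₁ = 4 + k²` (the root of `Λ₁`) and
`λ₂ = 2(1 + k² + √(1-k²+k⁴))`, and the bottom of the spectrum is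
`λ₀ = 2(1 + k² - √(1-k²+k⁴))` (the roots of `Λ₀Λ₁ - 2P(0)P(-1)`). -/
theorem lame_m2_gap_edges
    (k : ℝ) (hk : k ∈ Set.Ioo (0:ℝ) 1)
    (sn : ℝ → ℝ) (hsn : IsJacobiSn k sn)
    (lam lam' : ℕ → ℝ)
    -- λⱼ are 2K-periodic eigenvalues, λ'ⱼ (j ≥ 1) are 2K-antiperiodic ones
    (hper : ∀ j : ℕ, IsPeriodicEV (lamePot 2 k sn) (2 * ellK k) (lam j))
    (hanti : ∀ j : ℕ, 1 ≤ j →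
      IsAntiperiodicEV (lamePot 2 k sn) (2 * ellK k) (lam' j))
    -- they enumerate the whole periodic and antiperiodic spectra
    (hper_all : ∀ x : ℝ, IsPeriodicEV (lamePot 2 k sn) (2 * ellK k) x →
      ∃ j, lam j = x)
    (hanti_all : ∀ x : ℝ, IsAntiperiodicEV (lamePot 2 k sn) (2 * ellK k) x →
      ∃ j, 1 ≤ j ∧ lam' j = x)
    -- interlacing (oscillation theorem)
    (hinter : ∀ n : ℕ, 1 ≤ n →
      lam (2 * n - 2) < lam' (2 * n - 1) ∧ lam' (2 * n - 1) ≤ lam' (2 * n) ∧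
      lam' (2 * n) < lam (2 * n - 1) ∧ lam (2 * n - 1) ≤ lam (2 * n))
    (htend : Filter.Tendsto lam Filter.atTop Filter.atTop) :
    -- edges of the first spectral gap
    lam' 1 = 1 + k ^ 2 ∧ lam' 2 = 1 + 4 * k ^ 2 ∧
    -- edges of the second spectral gap
    lam 1 = 4 + k ^ 2 ∧
    lam 2 = 2 * (1 + k ^ 2 + Real.sqrt (1 - k ^ 2 + k ^ 4)) ∧
    -- bottom of the spectrum
    lam 0 = 2 * (1 + k ^ 2 - Real.sqrt (1 - k ^ 2 + k ^ 4)) ∧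
    -- these are exactly the roots of the corresponding determinants:
    lamePs 2 k 0 + lameLs 2 k (lam' 1) 0 = 0 ∧
    -lamePs 2 k 0 + lameLs 2 k (lam' 2) 0 = 0 ∧
    lameL 2 k (lam 1) 1 = 0 ∧
    lameL 2 k (lam 2) 0 * lameL 2 k (lam 2) 1
      - 2 * lameP 2 k 0 * lameP 2 k (-1) = 0 ∧
    lameL 2 k (lam 0) 0 * lameL 2 k (lam 0) 1
      - 2 * lameP 2 k 0 * lameP 2 k (-1) = 0 := by
  have h := hsn
  obtain ⟨ho1, ho2, ho3, ho4⟩ := LameMain.order_facts hk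
  have hk0 := hk.1
  -- monotonicity of `lam`
  have hstep : ∀ m : ℕ, lam m ≤ lam (m+1) := by
    intro m
    rcases Nat.even_or_odd m with ⟨t, ht⟩ | ⟨t, ht⟩
    · subst ht
      have h1 := hinter (t+1) (by omega)
      have e1 : 2*(t+1) - 2 = t + t := by omega
      have e2 : 2*(t+1) - 1 = t + t + 1 := by omega
      rw [e1, e2] at h1
      linarith [h1.1, h1.2.1, h1.2.2.1]
    · subst ht
      have h1 := hinter (t+1) (by omega)
      have e2 : 2*(t+1) - 1 = 2*t + 1 := by omega
      have e3 : 2*(t+1) = 2*t + 1 + 1 := by omega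
      rw [e2, e3] at h1
      exact h1.2.2.2
  have hmono : Monotone lam := monotone_nat_of_le_succ hstep
  -- monotonicity of `lam'` from index 1 on
  have hstep' : ∀ m : ℕ, 1 ≤ m → lam' m ≤ lam' (m+1) := by
    intro m hm
    rcases Nat.even_or_odd m with ⟨t, ht⟩ | ⟨t, ht⟩
    · subst ht
      have ht1 : 1 ≤ t := by omega
      have h1 := hinter t ht1
      have h2 := hinter (t+1) (by omega)
      have e1 : 2*t = t + t := by omega
      rw [e1] at h1
      have e2 : 2*(t+1) - 2 = t + t := by omega
      have e3 : 2*(t+1) - 1 = t + t + 1 := by omega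
      rw [e2, e3] at h2
      linarith [h1.2.2.1, h1.2.2.2, h2.1]
    · subst ht
      have h1 := hinter (t+1) (by omega)
      have e2 : 2*(t+1) - 1 = 2*t + 1 := by omega
      have e3 : 2*(t+1) = 2*t + 1 + 1 := by omega
      rw [e2, e3] at h1
      exact h1.2.1
  have hmono'' : ∀ i j : ℕ, 1 ≤ i → i ≤ j → lam' i ≤ lam' j := by
    have hmono' : ∀ i d : ℕ, 1 ≤ i → lam' i ≤ lam' (i + d) := by
      intro i d h1
      induction d with
      | zero => exact le_rfl
      | succ n ih => exact le_trans ih (hstep' (i + n) (by omega))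
    intro i j h1 h2
    have := hmono' i (j - i) h1
    rwa [show i + (j - i) = j from by omega] at this
  -- the five explicit eigenvalues
  obtain ⟨j0, hj0⟩ := hper_all _ (LameMain.ev_mu0 hk h)
  obtain ⟨j1, hj1⟩ := hper_all _ (LameMain.ev_mu1 hk h)
  obtain ⟨j2, hj2⟩ := hper_all _ (LameMain.ev_mu2 hk h)
  obtain ⟨q1, hq1ge, hq1⟩ := hanti_all _ (LameMain.ev_al1 hk h)
  obtain ⟨q2, hq2ge, hq2⟩ := hanti_all _ (LameMain.ev_al2 hk h)
  -- lam 0 = mu0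
  have hlam0le : lam 0 ≤ LameMain.mu0 k := hj0 ▸ hmono (Nat.zero_le j0)
  have hlam0 : lam 0 = LameMain.mu0 k := by
    rcases LameMain.periodic_classify hk h (hper 0) (by linarith) with h1 | h1
    · exact h1
    · exfalso; rw [h1] at hlam0le; linarith
  -- lam' 1 = 1 + k²
  have hl1le : lam' 1 ≤ 1 + k^2 := hq1 ▸ hmono'' 1 q1 le_rfl hq1ge
  have hl1 : lam' 1 = 1 + k^2 := by
    rcases LameMain.antiperiodic_classify hk h (hanti 1 le_rfl) (by linarith) with h1 | h1
    · exact h1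
    · exfalso; rw [h1] at hl1le; linarith
  -- interlacing at n = 1 with indices normalised
  have hi1 := hinter 1 le_rfl
  norm_num at hi1
  -- lam' 2 = 1 + 4k²
  have hq2ge2 : 2 ≤ q2 := by
    by_contra hq
    have : q2 = 1 := by omega
    rw [this, hl1] at hq2
    nlinarith
  have hl2le : lam' 2 ≤ 1 + 4*k^2 := hq2 ▸ hmono'' 2 q2 (by norm_num) hq2ge2
  have hl2 : lam' 2 = 1 + 4*k^2 := by
    rcases LameMain.antiperiodic_classify hk h (hanti 2 (by norm_num)) (by linarith) with h1 | h1
    · exfalso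
      have hq2ge3 : 3 ≤ q2 := by
        by_contra hq
        have : q2 = 2 := by omega
        rw [this, h1] at hq2
        nlinarith
      have hlam1gt : 1 + k^2 < lam 1 := by rw [← h1]; exact hi1.2.2.1
      have hi2 := hinter 2 (by norm_num)
      norm_num at hi2
      have h3 : lam' 3 ≤ lam' q2 := hmono'' 3 q2 (by norm_num) hq2ge3
      rw [hq2] at h3
      have hlam2lt : lam 2 < 1 + 4*k^2 := by linarith [hi2.1]
      have hlam1le2 : lam 1 ≤ lam 2 := hmono (by norm_num)
      rcases LameMain.periodic_classify hk h (hper 1) (by linarith) with h2 | h2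
      · rw [h2] at hlam1gt; linarith
      · rw [h2] at hlam1le2; linarith
    · exact h1
  -- lam 1 = 4 + k²
  have hj1ge : 1 ≤ j1 := by
    by_contra hj
    have : j1 = 0 := by omega
    rw [this, hlam0] at hj1
    linarith
  have hlam1le : lam 1 ≤ 4 + k^2 := hj1 ▸ hmono hj1ge
  have hlam1gt : 1 + 4*k^2 < lam 1 := by rw [← hl2]; exact hi1.2.2.1
  have hlam1 : lam 1 = 4 + k^2 := by
    rcases LameMain.periodic_classify hk h (hper 1) (by linarith) with h1 | h1
    · exfalso; rw [h1] at hlam1gt; linarith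
    · exact h1
  -- lam 2 = mu2
  have hj2ge : 2 ≤ j2 := by
    by_contra hj
    have : j2 = 0 ∨ j2 = 1 := by omega
    rcases this with h2 | h2 <;> rw [h2] at hj2
    · rw [hlam0] at hj2; linarith
    · rw [hlam1] at hj2; linarith
  have hlam2le : lam 2 ≤ LameMain.mu2 k := hj2 ▸ hmono hj2ge
  have hlam2 : lam 2 = LameMain.mu2 k := by
    rcases eq_or_lt_of_le hlam2le with he | hlt2
    · exact he
    · exfalso
      rcases LameMain.periodic_classify hk h (hper 2) hlt2 with h1 | h1
      · have h2 : lam 1 ≤ lam 2 := hmono (by norm_num)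
        rw [h1, hlam1] at h2
        linarith
      · have hj2ge3 : 3 ≤ j2 := by
          by_contra hj
          have : j2 = 2 := by omega
          rw [this, h1] at hj2
          linarith
        have hi2 := hinter 2 (by norm_num)
        norm_num at hi2
        have h3 : lam 3 ≤ lam j2 := hmono hj2ge3
        rw [hj2] at h3
        have hl3gt : 4 + k^2 < lam' 3 := by
          have := hi2.1; rw [h1] at this; linarith
        have hl3lt : lam' 3 < LameMain.mu2 k := by linarith [hi2.2.1, hi2.2.2.1]
        rcases LameMain.antiperiodic_classify hk h (hanti 3 (by norm_num)) hl3lt with h4 | h4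
        · rw [h4] at hl3gt; linarith
        · rw [h4] at hl3gt; linarith
  refine ⟨hl1, hl2, hlam1, ?_, ?_, ?_, ?_, ?_, ?_, ?_⟩
  · rw [hlam2]; rfl
  · rw [hlam0]; rfl
  · rw [hl1]; simp only [lamePs, lameLs]; push_cast; ring
  · rw [hl2]; simp only [lamePs, lameLs]; push_cast; ring
  · rw [hlam1]; simp only [lameL]; push_cast; ring
  · rw [hlam2]; simp only [lameL, lameP]; push_cast
    linear_combination LameMain.mu2_quad hk
  · rw [hlam0]; simp only [lameL, lameP]; push_cast
    linear_combination LameMain.mu0_quad hk
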